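/- arXiv:1904.07329 — 8 statements merged into one kernel-verified Lean document; each statement's English description precedes it below -/
import Mathlib

section
/- Let L be a positive integer, let R ∈ ℂ^{L×L} be Hermitian, let q ∈ ℂ^L, and define f̄(y) = Re(y† R y − q† y − y† q) for y ∈ ℂ^L. Let x ∈ ℂ^L satisfy |x_l| = 1 for all l, let β ∈ ℝ, set w = 2Rx − 2q, define w̃ ∈ ℂ^L by w̃_l = x_l²·conj(w_l), and set x̄ = x − (β/2)·(w − w̃). Then f̄(x) − f̄(x̄) = (β/4)·Re((w − w̃)† (I − βR) (w − w̃)). -/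
open Matrix

/-- The quadratic cost `f̄(y) = Re(y† R y − q† y − y† q)`. -/
noncomputable def fbar {L : ℕ} (R : Matrix (Fin L) (Fin L) ℂ) (q : Fin L → ℂ)
    (y : Fin L → ℂ) : ℝ :=
  (star y ⬝ᵥ R.mulVec y - star q ⬝ᵥ y - star y ⬝ᵥ q).re

/-- With `R` Hermitian, `x ∈ S^L`, `w = 2Rx − 2q`,
`w̃_l = x_l²·conj(w_l)` and `x̄ = x − (β/2)(w − w̃)`, one has
`f̄(x) − f̄(x̄) = (β/4)·Re((w − w̃)† (I − βR) (w − w̃))`. -/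
theorem stmt5 (L : ℕ) (hL : 0 < L) (R : Matrix (Fin L) (Fin L) ℂ)
    (hR : R.IsHermitian) (q x : Fin L → ℂ)
    (hx : ∀ l, ‖x l‖ = 1) (β : ℝ)
    (w : Fin L → ℂ) (hw : w = fun l => 2 * R.mulVec x l - 2 * q l)
    (wt : Fin L → ℂ) (hwt : ∀ l, wt l = x l ^ 2 * (starRingEnd ℂ) (w l))
    (xb : Fin L → ℂ)
    (hxb : ∀ l, xb l = x l - ((β / 2 : ℝ) : ℂ) * (w l - wt l)) :
    fbar R q x - fbar R q xb
      = (β / 4) *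
        (star (w - wt) ⬝ᵥ
          ((1 - (β : ℂ) • R).mulVec (w - wt))).re := by
  set d : Fin L → ℂ := w - wt with hd
  set c : ℂ := ((β / 2 : ℝ) : ℂ) with hc
  -- key pointwise identity: `d† w + w† d = d† d`
  have key : star d ⬝ᵥ w + star w ⬝ᵥ d = star d ⬝ᵥ d := by
    simp only [dotProduct, ← Finset.sum_add_distrib]
    refine Finset.sum_congr rfl fun l _ => ?_
    have h1 : (starRingEnd ℂ) (x l) * x l = 1 := by
      rw [← Complex.normSq_eq_conj_mul_self, ← Complex.sq_norm, hx l]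
      norm_num
    have hdl : d l = w l - x l ^ 2 * (starRingEnd ℂ) (w l) := by
      simp [hd, hwt l]
    simp only [Pi.star_apply, Complex.star_def]
    rw [hdl]
    simp only [map_sub, _root_.map_mul, map_pow, Complex.conj_conj]
    linear_combination (-(w l * (starRingEnd ℂ) (w l) *
      (1 + (starRingEnd ℂ) (x l) * x l))) * h1
  -- hermitian transfer
  have herm : star x ⬝ᵥ R.mulVec d = star (R.mulVec x) ⬝ᵥ d := by
    rw [Matrix.dotProduct_mulVec, Matrix.star_mulVec, hR.eq]
  -- express `R x` through `w`
  have hRx : R.mulVec x = (2:ℂ)⁻¹ • w + q := by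
    funext l
    have hwl : w l = 2 * R.mulVec x l - 2 * q l := by rw [hw]
    simp only [Pi.add_apply, Pi.smul_apply, smul_eq_mul]
    rw [hwl]; ring
  have h1 : star d ⬝ᵥ R.mulVec x = (2:ℂ)⁻¹ * (star d ⬝ᵥ w) + star d ⬝ᵥ q := by
    rw [hRx]
    simp [dotProduct_add, dotProduct_smul, smul_eq_mul]
  have h2 : star x ⬝ᵥ R.mulVec d = (2:ℂ)⁻¹ * (star w ⬝ᵥ d) + star q ⬝ᵥ d := by
    rw [herm, hRx]
    simp [star_add, star_smul, add_dotProduct, smul_dotProduct, smul_eq_mul,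
      Complex.star_def, map_inv₀]
  -- rewrite `xb`
  have hxb' : xb = x - c • d := by
    funext l
    simp [hxb l, hd, hc]
  have hsxb : star xb = star x - c • star d := by
    rw [hxb', star_sub, star_smul]
    congr 1
    rw [hc, Complex.star_def, Complex.conj_ofReal]
  -- the complex identity
  have hmain : (star x ⬝ᵥ R.mulVec x - star q ⬝ᵥ x - star x ⬝ᵥ q) -
      (star xb ⬝ᵥ R.mulVec xb - star q ⬝ᵥ xb - star xb ⬝ᵥ q)
      = ((β / 4 : ℝ) : ℂ) * (star d ⬝ᵥ ((1 - (β : ℂ) • R).mulVec d)) := by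
    rw [hsxb, hxb']
    rw [Matrix.sub_mulVec, Matrix.one_mulVec, Matrix.smul_mulVec]
    simp only [Matrix.mulVec_sub, Matrix.mulVec_smul, dotProduct_sub,
      sub_dotProduct, dotProduct_smul, smul_dotProduct, smul_eq_mul]
    rw [h1, h2, hc]
    push_cast
    linear_combination ((β : ℂ) / 4) * key
  -- conclude on real parts
  unfold fbar
  rw [← Complex.sub_re, hmain, Complex.re_ofReal_mul]
end

section
/- (Lemma 1) Let L be a positive integer, let P ∈ ℂ^{L×L} be Hermitian positive semidefinite, let q ∈ ℂ^L, let γ ≥ 0, and define f̄(y) = Re(y†(P + γI)y − q†y − y†q). Let x ∈ S^L, let w(x) = 2(P + γI)x − 2q be the gradient of f̄ at x, and set x̄ = x + β·P_x(−w(x)). Let λ_{P+γI} denote the largest eigenvalue of P + γI and assume λ_{P+γI} > 0. If the step size β satisfies 0 < β < 1/λ_{P+γI}, then f̄(x) ≥ f̄(x̄). -/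
open Matrix
open scoped ComplexOrder

/-- Projection onto the tangent space of the complex circle manifold at `z`:
`(P_z(w))_l = w_l − Re(conj(w_l)·z_l)·z_l`. -/
noncomputable def proj {L : ℕ} (z w : Fin L → ℂ) : Fin L → ℂ :=
  fun l => w l - ((((starRingEnd ℂ) (w l)) * z l).re : ℂ) * z l

/-- A Hermitian matrix whose eigenvalues are all at most `lam` satisfies
`lam • 1 - R` positive semidefinite. -/
lemma aux_shift_psd {L : ℕ} (R : Matrix (Fin L) (Fin L) ℂ) (hR : R.IsHermitian) (lam : ℝ)
    (h : ∀ i, hR.eigenvalues i ≤ lam) : ((lam:ℂ) • 1 - R).PosSemidef := by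
  have hU : (hR.eigenvectorUnitary : Matrix (Fin L) (Fin L) ℂ) *
      star (hR.eigenvectorUnitary : Matrix (Fin L) (Fin L) ℂ) = 1 :=
    (Matrix.mem_unitaryGroup_iff).mp (hR.eigenvectorUnitary).2
  have hd : diagonal (fun i => (lam:ℂ) - (hR.eigenvalues i:ℂ))
      = (lam:ℂ) • (1 : Matrix (Fin L) (Fin L) ℂ) - diagonal (RCLike.ofReal ∘ hR.eigenvalues) := by
    rw [smul_one_eq_diagonal, ← diagonal_sub]
    rfl
  have key : (lam:ℂ) • (1 : Matrix (Fin L) (Fin L) ℂ) - R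
      = (hR.eigenvectorUnitary : Matrix (Fin L) (Fin L) ℂ) *
        diagonal (fun i => (lam:ℂ) - (hR.eigenvalues i : ℂ)) *
        star (hR.eigenvectorUnitary : Matrix (Fin L) (Fin L) ℂ) := by
    rw [hd, Matrix.mul_sub, Matrix.sub_mul]
    conv_lhs => rw [hR.spectral_theorem, Unitary.conjStarAlgAut_apply]
    congr 1
    rw [Matrix.mul_smul, Matrix.mul_one, Matrix.smul_mul, hU]
  rw [key, Matrix.star_eq_conjTranspose]
  refine (Matrix.posSemidef_diagonal_iff.mpr ?_).mul_mul_conjTranspose_same _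
  intro i
  rw [show (lam:ℂ) - (hR.eigenvalues i : ℂ) = ((lam - hR.eigenvalues i : ℝ) : ℂ) by push_cast; ring]
  rw [Complex.zero_le_real]
  linarith [h i]

/-- Pointwise identity for the tangent projection of the negative gradient. -/
lemma aux_pointwise (a z : ℂ) (hz : Complex.normSq z = 1) :
    ((starRingEnd ℂ) (-a - ((((starRingEnd ℂ) (-a)) * z).re : ℂ) * z) * a).re
      = - Complex.normSq (-a - ((((starRingEnd ℂ) (-a)) * z).re : ℂ) * z) := by
  have h : z.re^2 + z.im^2 = 1 := by simpa [Complex.normSq_apply, sq] using hz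
  simp only [Complex.normSq_apply, map_sub, map_neg, _root_.map_mul, Complex.conj_re, Complex.conj_im,
    Complex.mul_re, Complex.mul_im, Complex.sub_re, Complex.sub_im, Complex.neg_re,
    Complex.neg_im, Complex.ofReal_re, Complex.ofReal_im, Complex.conj_ofReal]
  linear_combination (a.re*z.re + a.im*z.im)^2 * h

/-- Lemma 1: With `P` Hermitian PSD, `γ ≥ 0`,
`f̄(y) = Re(y†(P+γI)y − q†y − y†q)`, `x ∈ S^L`, `w(x) = 2(P+γI)x − 2q`,
`x̄ = x + β·P_x(−w(x))`, and `λ` the largest eigenvalue of `P + γI`, `λ > 0`: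
if `0 < β < 1/λ` then `f̄(x) ≥ f̄(x̄)`. -/
theorem stmt6 (L : ℕ) (hL : 0 < L) (P : Matrix (Fin L) (Fin L) ℂ)
    (hP : P.PosSemidef) (q : Fin L → ℂ) (γ : ℝ) (hγ : 0 ≤ γ)
    (hHerm : (P + (γ : ℂ) • (1 : Matrix (Fin L) (Fin L) ℂ)).IsHermitian)
    (lam : ℝ) (hlam_mem : ∃ i, hHerm.eigenvalues i = lam)
    (hlam_ub : ∀ i, hHerm.eigenvalues i ≤ lam) (hlam_pos : 0 < lam)
    (β : ℝ) (hβ : 0 < β) (hβ' : β < 1 / lam)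
    (x : Fin L → ℂ) (hx : ∀ l, ‖x l‖ = 1)
    (w : Fin L → ℂ)
    (hw : w = fun l =>
      2 * (P + (γ : ℂ) • (1 : Matrix (Fin L) (Fin L) ℂ)).mulVec x l - 2 * q l)
    (xb : Fin L → ℂ)
    (hxb : ∀ l, xb l = x l + (β : ℂ) * proj x (-w) l) :
    fbar (P + (γ : ℂ) • (1 : Matrix (Fin L) (Fin L) ℂ)) q xb
      ≤ fbar (P + (γ : ℂ) • (1 : Matrix (Fin L) (Fin L) ℂ)) q x := by
  set R := P + (γ : ℂ) • (1 : Matrix (Fin L) (Fin L) ℂ) with hRdef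
  set p : Fin L → ℂ := proj x (-w) with hpdef
  have hxb' : xb = x + (β:ℂ) • p := by
    funext l
    simp [hxb l, Pi.add_apply, Pi.smul_apply, smul_eq_mul]
  -- real-part symmetry facts
  have hsym : (star x ⬝ᵥ R *ᵥ p).re = (star p ⬝ᵥ R *ᵥ x).re := by
    rw [show star x ⬝ᵥ R *ᵥ p = star (star p ⬝ᵥ R *ᵥ x) by
      rw [star_dotProduct, star_mulVec, ← dotProduct_mulVec, hHerm.eq]]
    simp [Complex.star_def]
  have hqsym : (star q ⬝ᵥ p).re = (star p ⬝ᵥ q).re := by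
    rw [show star q ⬝ᵥ p = star (star p ⬝ᵥ q) by rw [star_dotProduct]]
    simp [Complex.star_def]
  -- expansion of the quadratic form
  have expand : star xb ⬝ᵥ R *ᵥ xb - star q ⬝ᵥ xb - star xb ⬝ᵥ q
      = (star x ⬝ᵥ R *ᵥ x - star q ⬝ᵥ x - star x ⬝ᵥ q)
        + ((β^2 : ℝ) : ℂ) * (star p ⬝ᵥ R *ᵥ p)
        + (β:ℂ) * (star x ⬝ᵥ R *ᵥ p) + (β:ℂ) * (star p ⬝ᵥ R *ᵥ x)
        - (β:ℂ) * (star q ⬝ᵥ p) - (β:ℂ) * (star p ⬝ᵥ q) := by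
    rw [hxb']
    simp only [star_add, star_smul, mulVec_add, mulVec_smul, dotProduct_add, add_dotProduct,
      smul_dotProduct, dotProduct_smul, smul_eq_mul, Complex.star_def, Complex.conj_ofReal]
    push_cast
    ring
  -- ⟨p, w⟩ in terms of the quadratic pieces
  have hpw1 : (star p ⬝ᵥ w).re = 2*(star p ⬝ᵥ R *ᵥ x).re - 2*(star p ⬝ᵥ q).re := by
    have h1 : star p ⬝ᵥ w = 2 * (star p ⬝ᵥ R *ᵥ x) - 2 * (star p ⬝ᵥ q) := by
      simp only [dotProduct, Finset.mul_sum, ← Finset.sum_sub_distrib]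
      refine Finset.sum_congr rfl fun l _ => ?_
      rw [hw]
      ring
    rw [h1]
    simp [Complex.sub_re, Complex.mul_re]
  -- ⟨p, w⟩ = -‖p‖²
  have hpw2 : (star p ⬝ᵥ w).re = - ∑ l, Complex.normSq (p l) := by
    have : star p ⬝ᵥ w = ∑ l, (starRingEnd ℂ) (p l) * w l := rfl
    rw [this, Complex.re_sum, ← Finset.sum_neg_distrib]
    refine Finset.sum_congr rfl fun l _ => ?_
    have hz : Complex.normSq (x l) = 1 := by
      rw [← Complex.sq_norm, hx l]; norm_num
    have hpl : p l = -(w l) - ((((starRingEnd ℂ) (-(w l))) * x l).re : ℂ) * x l := by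
      simp [hpdef, proj]
    rw [hpl]
    exact aux_pointwise (w l) (x l) hz
  -- Rayleigh bound
  have hray : (star p ⬝ᵥ R *ᵥ p).re ≤ lam * ∑ l, Complex.normSq (p l) := by
    have hpsd := (aux_shift_psd R hHerm lam hlam_ub).dotProduct_mulVec_nonneg p
    have h1 : star p ⬝ᵥ ((lam:ℂ) • 1 - R) *ᵥ p
        = (lam:ℂ) * (star p ⬝ᵥ p) - star p ⬝ᵥ R *ᵥ p := by
      rw [Matrix.sub_mulVec, dotProduct_sub, Matrix.smul_mulVec, Matrix.one_mulVec,
        dotProduct_smul, smul_eq_mul]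
    have h2 : (star p ⬝ᵥ p).re = ∑ l, Complex.normSq (p l) := by
      rw [show star p ⬝ᵥ p = ∑ l, (starRingEnd ℂ) (p l) * p l from rfl, Complex.re_sum]
      refine Finset.sum_congr rfl fun l _ => ?_
      rw [← Complex.normSq_eq_conj_mul_self]
      simp
    have h3 : 0 ≤ (star p ⬝ᵥ ((lam:ℂ) • 1 - R) *ᵥ p).re := by
      exact_mod_cast (Complex.le_def.mp hpsd).1
    rw [h1] at h3
    simp only [Complex.sub_re, Complex.mul_re, Complex.ofReal_re, Complex.ofReal_im] at h3
    rw [h2] at h3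
    simpa using by linarith
  -- put everything together
  have hNnn : 0 ≤ ∑ l, Complex.normSq (p l) :=
    Finset.sum_nonneg fun l _ => Complex.normSq_nonneg _
  have hbl : β * lam < 1 := (lt_div_iff₀ hlam_pos).mp hβ'
  have hfb : fbar R q xb = fbar R q x + β^2 * (star p ⬝ᵥ R *ᵥ p).re
      + β * ((star x ⬝ᵥ R *ᵥ p).re + (star p ⬝ᵥ R *ᵥ x).re)
      - β * ((star q ⬝ᵥ p).re + (star p ⬝ᵥ q).re) := by
    rw [fbar, fbar, expand]
    simp only [Complex.add_re, Complex.sub_re, Complex.re_ofReal_mul]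
    ring
  rw [hfb, hsym, hqsym]
  have hkey : 2*(star p ⬝ᵥ R *ᵥ x).re - 2*(star p ⬝ᵥ q).re = - ∑ l, Complex.normSq (p l) := by
    rw [← hpw1, hpw2]
  nlinarith [mul_nonneg hβ.le hNnn, mul_nonneg (mul_nonneg hβ.le hβ.le) hNnn,
    mul_le_mul_of_nonneg_left hray (mul_nonneg hβ.le hβ.le)]
end

section
/- Let L be a positive integer and let P, Ψ ∈ ℂ^{L×L} be Hermitian positive semidefinite matrices with largest eigenvalues λ_P and λ_Ψ respectively. Then for every x ∈ ℂ^L with |x_l| = 1 for all l, Re(x†(ΨP + PΨ)x) ≥ −(L/4)·λ_Ψ·λ_P. -/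
open Matrix
open scoped ComplexOrder

lemma aux_conj {n : Type*} [Fintype n] (A B : Matrix n n ℂ) (x : n → ℂ) :
    star (A *ᵥ x) ⬝ᵥ (B *ᵥ x) = star x ⬝ᵥ (Aᴴ * B) *ᵥ x := by
  rw [Matrix.star_mulVec, Matrix.dotProduct_mulVec, Matrix.dotProduct_mulVec,
    Matrix.vecMul_vecMul]

lemma aux_psd {n : Type*} [Fintype n] [DecidableEq n] {A : Matrix n n ℂ} (hA : A.PosSemidef)
    {c : ℝ} (hub : ∀ i, hA.isHermitian.eigenvalues i ≤ c) :
    ((c : ℂ) • A - A * A).PosSemidef := by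
  have hH := hA.isHermitian
  set U : Matrix n n ℂ := (hH.eigenvectorUnitary : Matrix n n ℂ) with hUdef
  have hU' : star U * U = 1 := Matrix.mem_unitaryGroup_iff'.mp hH.eigenvectorUnitary.2
  set D : Matrix n n ℂ := Matrix.diagonal (RCLike.ofReal ∘ hH.eigenvalues) with hDdef
  have hspec : A = U * D * star U := hH.spectral_theorem
  have key : (c : ℂ) • A - A * A = U * ((c : ℂ) • D - D * D) * star U := by
    rw [hspec, Matrix.mul_sub, Matrix.sub_mul]
    congr 1
    · rw [Matrix.mul_smul, Matrix.smul_mul]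
    · calc (U * D * star U) * (U * D * star U)
          = U * (D * ((star U * U) * (D * star U))) := by simp only [mul_assoc]
        _ = U * (D * D) * star U := by rw [hU']; simp [mul_assoc]
  have hdiag : ((c : ℂ) • D - D * D) = Matrix.diagonal
      (RCLike.ofReal ∘ fun i => c * hH.eigenvalues i - hH.eigenvalues i * hH.eigenvalues i) := by
    rw [hDdef, Matrix.diagonal_mul_diagonal]
    ext i j
    by_cases h : i = j <;> simp [Matrix.diagonal_apply, h, mul_sub]
  rw [key, hdiag, Matrix.star_eq_conjTranspose]
  refine Matrix.PosSemidef.mul_mul_conjTranspose_same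
    (Matrix.posSemidef_diagonal_iff.mpr fun i => ?_) U
  have h1 := hA.eigenvalues_nonneg i
  have h2 := hub i
  simp only [Function.comp_apply, RCLike.ofReal_nonneg]
  nlinarith

lemma aux_quad {n : Type*} [Fintype n] [DecidableEq n] {A : Matrix n n ℂ}
    (hA : A.PosSemidef) {c : ℝ} (hub : ∀ i, hA.isHermitian.eigenvalues i ≤ c)
    (x : n → ℂ) :
    (star x ⬝ᵥ (A * A) *ᵥ x).re ≤ c * (star x ⬝ᵥ A *ᵥ x).re := by
  have h := (aux_psd hA hub).dotProduct_mulVec_nonneg x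
  rw [Matrix.sub_mulVec, dotProduct_sub, Matrix.smul_mulVec, dotProduct_smul] at h
  have h' := (Complex.le_def.mp h).1
  simp only [Complex.zero_re, Complex.sub_re, smul_eq_mul, Complex.mul_re,
    Complex.ofReal_re, Complex.ofReal_im, zero_mul, sub_zero] at h'
  linarith

/-- If `P, Ψ` are Hermitian PSD with largest eigenvalues
`lamP, lamPsi`, then for every unimodular `x ∈ ℂ^L`,
`Re(x†(ΨP + PΨ)x) ≥ −(L/4)·lamPsi·lamP`. -/
theorem stmt8 (L : ℕ) (hL : 0 < L)
    (P Ψ : Matrix (Fin L) (Fin L) ℂ) (hP : P.PosSemidef) (hΨ : Ψ.PosSemidef)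
    (lamP lamPsi : ℝ)
    (hlamP_mem : ∃ i, hP.isHermitian.eigenvalues i = lamP)
    (hlamP_ub : ∀ i, hP.isHermitian.eigenvalues i ≤ lamP)
    (hlamPsi_mem : ∃ i, hΨ.isHermitian.eigenvalues i = lamPsi)
    (hlamPsi_ub : ∀ i, hΨ.isHermitian.eigenvalues i ≤ lamPsi)
    (x : Fin L → ℂ) (hx : ∀ l, ‖x l‖ = 1) :
    -((L : ℝ) / 4) * lamPsi * lamP ≤ (star x ⬝ᵥ (Ψ * P + P * Ψ).mulVec x).re := by
  have ha : 0 ≤ lamPsi := by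
    obtain ⟨i, hi⟩ := hlamPsi_mem; exact hi ▸ hΨ.eigenvalues_nonneg i
  have hb : 0 ≤ lamP := by
    obtain ⟨i, hi⟩ := hlamP_mem; exact hi ▸ hP.eigenvalues_nonneg i
  set u : Fin L → ℂ := Ψ *ᵥ x with hu
  set v : Fin L → ℂ := P *ᵥ x with hv
  set w : Fin L → ℂ := u - ((lamPsi / 2 : ℝ) : ℂ) • x with hw
  -- basic reals
  set p : ℝ := (star x ⬝ᵥ v).re with hp
  set q : ℝ := (star x ⬝ᵥ u).re with hq
  have hp0 : 0 ≤ p := (Complex.le_def.mp (hP.dotProduct_mulVec_nonneg x)).1.trans_eq' (by simp)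
  have hq0 : 0 ≤ q := (Complex.le_def.mp (hΨ.dotProduct_mulVec_nonneg x)).1.trans_eq' (by simp)
  -- ‖x‖² = L
  have hxx : star x ⬝ᵥ x = (L : ℂ) := by
    have h1 : ∀ i : Fin L, (starRingEnd ℂ) (x i) * x i = 1 := by
      intro i
      rw [← Complex.normSq_eq_conj_mul_self, ← Complex.sq_norm, hx]
      norm_num
    simp [dotProduct, h1]
  -- Euclidean space bridge
  set e : (Fin L → ℂ) → EuclideanSpace ℂ (Fin L) := fun y => (WithLp.equiv 2 _).symm y with he
  have hps : ∀ y z : Fin L → ℂ, (inner ℂ (e y) (e z) : ℂ) = star y ⬝ᵥ z := fun y z =>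
    by rw [dotProduct_comm]; rfl
  -- conjugate symmetry of re
  have hres : ∀ y z : Fin L → ℂ, (star y ⬝ᵥ z).re = (star z ⬝ᵥ y).re := by
    intro y z
    rw [Matrix.star_dotProduct]
    simp
  -- ‖e v‖² ≤ lamP * p
  have hv2 : ‖e v‖ ^ 2 ≤ lamP * p := by
    have h1 : (inner ℂ (e v) (e v) : ℂ) = star x ⬝ᵥ (Pᴴ * P) *ᵥ x := by
      rw [hps]; exact aux_conj P P x
    have h2 : ‖e v‖ ^ 2 = (star x ⬝ᵥ (P * P) *ᵥ x).re := by
      rw [← inner_self_eq_norm_sq (𝕜 := ℂ), h1, hP.isHermitian.eq]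
      rfl
    rw [h2]
    exact aux_quad hP hlamP_ub x
  -- ‖e w‖² ≤ (lamPsi/2)² * L
  have hw2 : ‖e w‖ ^ 2 ≤ (lamPsi / 2) ^ 2 * L := by
    have huu : (star u ⬝ᵥ u).re ≤ lamPsi * q := by
      have h1 : star u ⬝ᵥ u = star x ⬝ᵥ (Ψ * Ψ) *ᵥ x := by
        rw [hu, aux_conj, hΨ.isHermitian.eq]
      rw [h1, hq]
      exact aux_quad hΨ hlamPsi_ub x
    have hexp : (star w ⬝ᵥ w).re
        = (star u ⬝ᵥ u).re - lamPsi * q + (lamPsi / 2) ^ 2 * L := by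
      rw [hw]
      simp only [sub_dotProduct, dotProduct_sub, smul_dotProduct, dotProduct_smul,
        star_sub, star_smul, Complex.star_def, Complex.conj_ofReal, hxx]
      have h3 : (star u ⬝ᵥ x).re = q := hres u x
      simp only [Complex.sub_re, smul_eq_mul, Complex.mul_re, Complex.ofReal_re,
        Complex.ofReal_im, zero_mul, sub_zero, Complex.natCast_re, Complex.natCast_im,
        mul_zero, h3]
      rw [hq]
      ring
    have h4 : ‖e w‖ ^ 2 = (star w ⬝ᵥ w).re := by
      rw [← inner_self_eq_norm_sq (𝕜 := ℂ), hps]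
      rfl
    rw [h4, hexp]
    linarith
  -- Cauchy–Schwarz
  have hCS : -(‖e w‖ * ‖e v‖) ≤ (star w ⬝ᵥ v).re := by
    have h1 : ‖(inner ℂ (e w) (e v) : ℂ)‖ ≤ ‖e w‖ * ‖e v‖ := norm_inner_le_norm _ _
    have h2 : -‖star w ⬝ᵥ v‖ ≤ (star w ⬝ᵥ v).re := by
      have := Complex.abs_re_le_norm (star w ⬝ᵥ v)
      have := neg_abs_le ((star w ⬝ᵥ v).re)
      linarith
    rw [hps] at h1
    linarith
  -- decompose the quadratic form
  have hQ : (star x ⬝ᵥ (Ψ * P + P * Ψ).mulVec x).re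
      = 2 * (star w ⬝ᵥ v).re + lamPsi * p := by
    have h1 : star x ⬝ᵥ (Ψ * P) *ᵥ x = star u ⬝ᵥ v := by
      rw [hu, hv, aux_conj, hΨ.isHermitian.eq]
    have h2 : (star x ⬝ᵥ (P * Ψ) *ᵥ x).re = (star u ⬝ᵥ v).re := by
      have e1 : star v ⬝ᵥ u = star x ⬝ᵥ (Pᴴ * Ψ) *ᵥ x := aux_conj P Ψ x
      rw [hP.isHermitian.eq] at e1
      rw [← e1]
      exact hres v u
    have h3 : (star u ⬝ᵥ v).re = (star w ⬝ᵥ v).re + (lamPsi / 2) * p := by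
      have : u = w + ((lamPsi / 2 : ℝ) : ℂ) • x := by rw [hw]; ring_nf
      rw [this]
      simp only [add_dotProduct, star_add, star_smul, Complex.star_def,
        Complex.conj_ofReal, smul_dotProduct, Complex.add_re, smul_eq_mul,
        Complex.mul_re, Complex.ofReal_re, Complex.ofReal_im, zero_mul, sub_zero]
      rw [hp]
    rw [Matrix.add_mulVec, dotProduct_add, Complex.add_re, h1, h2, h3]
    ring
  rw [hQ]
  -- final arithmetic
  have hnw : 0 ≤ ‖e w‖ := norm_nonneg _
  have hnv : 0 ≤ ‖e v‖ := norm_nonneg _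
  have hL0 : (0:ℝ) ≤ L := Nat.cast_nonneg L
  have key : ‖e w‖ * ‖e v‖ ≤ lamPsi / 2 * p + (L:ℝ) / 8 * lamPsi * lamP := by
    have h1 : ‖e w‖ ≤ Real.sqrt ((lamPsi / 2) ^ 2 * L) := by
      calc ‖e w‖ = Real.sqrt (‖e w‖ ^ 2) := (Real.sqrt_sq hnw).symm
        _ ≤ _ := Real.sqrt_le_sqrt hw2
    have h2 : ‖e v‖ ≤ Real.sqrt (lamP * p) := by
      calc ‖e v‖ = Real.sqrt (‖e v‖ ^ 2) := (Real.sqrt_sq hnv).symm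
        _ ≤ _ := Real.sqrt_le_sqrt hv2
    have h3 : ‖e w‖ * ‖e v‖ ≤ Real.sqrt ((lamPsi / 2) ^ 2 * L) * Real.sqrt (lamP * p) :=
      mul_le_mul h1 h2 hnv (Real.sqrt_nonneg _)
    have h4 : Real.sqrt ((lamPsi / 2) ^ 2 * L) * Real.sqrt (lamP * p)
        = Real.sqrt ((lamPsi / 2) ^ 2 * L * (lamP * p)) :=
      (Real.sqrt_mul (by positivity) _).symm
    have h5 : Real.sqrt ((lamPsi / 2) ^ 2 * L * (lamP * p))
        ≤ lamPsi / 2 * p + (L:ℝ) / 8 * lamPsi * lamP := by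
      rw [show lamPsi / 2 * p + (L:ℝ) / 8 * lamPsi * lamP
          = Real.sqrt ((lamPsi / 2 * p + (L:ℝ) / 8 * lamPsi * lamP) ^ 2) from
        (Real.sqrt_sq (by positivity)).symm]
      apply Real.sqrt_le_sqrt
      nlinarith [sq_nonneg (lamPsi / 2 * p - (L:ℝ) / 8 * lamPsi * lamP)]
    linarith
  linarith [hCS, key]
end

section
/- Let L be a positive integer, let P ∈ ℂ^{L×L} be Hermitian positive semidefinite, let q ∈ ℂ^L, let γ ≥ 0, and define f̄(y) = Re(y†(P + γI)y − q†y − y†q). Let u ∈ S^L, let Ψ be the L×L real diagonal matrix with nonnegative diagonal entries ψ_1,…,ψ_L, and set x̄ = (I + Ψ)u. Then f̄(x̄) − f̄(u) ≥ 2γ·Σ_l ψ_l + Re(u†(ΨP + PΨ)u) − 2·Re(q† Ψ u). -/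
open Matrix
open scoped ComplexOrder

/-- With `P` Hermitian PSD, `γ ≥ 0`, `u ∈ S^L`, `Ψ` real diagonal
with nonnegative entries `ψ_l`, and `x̄ = (I + Ψ)u`:
`f̄(x̄) − f̄(u) ≥ 2γ·Σ_l ψ_l + Re(u†(ΨP + PΨ)u) − 2·Re(q† Ψ u)`. -/
theorem stmt9 (L : ℕ) (hL : 0 < L) (P : Matrix (Fin L) (Fin L) ℂ)
    (hP : P.PosSemidef) (q : Fin L → ℂ) (γ : ℝ) (hγ : 0 ≤ γ)
    (u : Fin L → ℂ) (hu : ∀ l, ‖u l‖ = 1)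
    (ψ : Fin L → ℝ) (hψ : ∀ l, 0 ≤ ψ l)
    (Ψ : Matrix (Fin L) (Fin L) ℂ)
    (hΨ : Ψ = Matrix.diagonal fun l => ((ψ l : ℝ) : ℂ))
    (xb : Fin L → ℂ)
    (hxb : xb = ((1 : Matrix (Fin L) (Fin L) ℂ) + Ψ).mulVec u) :
    2 * γ * (∑ l, ψ l) + (star u ⬝ᵥ (Ψ * P + P * Ψ).mulVec u).re
        - 2 * (star q ⬝ᵥ Ψ.mulVec u).re
      ≤ fbar (P + (γ : ℂ) • (1 : Matrix (Fin L) (Fin L) ℂ)) q xb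
        - fbar (P + (γ : ℂ) • (1 : Matrix (Fin L) (Fin L) ℂ)) q u := by
  set v : Fin L → ℂ := Ψ.mulVec u with hv
  have hv' : ∀ l, v l = (ψ l : ℂ) * u l := by
    intro l; simp [hv, hΨ, Matrix.mulVec_diagonal]
  have hmu : ∀ l, star (u l) * u l = 1 := by
    intro l
    have h1 : Complex.normSq (u l) = 1 := by
      rw [← Complex.sq_norm, hu l]; norm_num
    rw [Complex.star_def, mul_comm, Complex.mul_conj, h1, Complex.ofReal_one]
  have hxb' : xb = u + v := by
    rw [hxb, Matrix.add_mulVec, Matrix.one_mulVec]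
  have hR : ∀ w z : Fin L → ℂ,
      star w ⬝ᵥ (P + (γ : ℂ) • (1 : Matrix (Fin L) (Fin L) ℂ)).mulVec z
        = star w ⬝ᵥ P.mulVec z + (γ : ℂ) * (star w ⬝ᵥ z) := by
    intro w z
    simp [Matrix.add_mulVec, Matrix.smul_mulVec, Matrix.one_mulVec,
      dotProduct_add, dotProduct_smul, smul_eq_mul]
  have hvu : star v ⬝ᵥ u = ((∑ l, ψ l : ℝ) : ℂ) := by
    push_cast
    simp only [dotProduct, Pi.star_apply]
    refine Finset.sum_congr rfl fun l _ => ?_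
    rw [hv', star_mul', mul_assoc, hmu l, mul_one, Complex.star_def,
      Complex.conj_ofReal]
  have hvq : (star v ⬝ᵥ q).re = (star q ⬝ᵥ v).re := by
    have h : star v ⬝ᵥ q = star (star q ⬝ᵥ v) := by rw [star_dotProduct]
    rw [h, Complex.star_def, Complex.conj_re]
  have hsv : ∀ w : Fin L → ℂ, star u ⬝ᵥ Ψ.mulVec w = star v ⬝ᵥ w := by
    intro w
    simp only [dotProduct, Pi.star_apply, hΨ, Matrix.mulVec_diagonal]
    refine Finset.sum_congr rfl fun l _ => ?_
    rw [hv', star_mul', Complex.star_def, Complex.conj_ofReal]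
    ring
  have hmix : (star u ⬝ᵥ (Ψ * P + P * Ψ).mulVec u) =
      star v ⬝ᵥ P.mulVec u + star u ⬝ᵥ P.mulVec v := by
    rw [Matrix.add_mulVec, dotProduct_add, ← Matrix.mulVec_mulVec, hsv,
      ← Matrix.mulVec_mulVec]
  have hPv : 0 ≤ (star v ⬝ᵥ P.mulVec v).re := by
    simpa using (Complex.le_def.mp (hP.dotProduct_mulVec_nonneg v)).1
  have hvv : 0 ≤ (star v ⬝ᵥ v).re := by
    simp only [dotProduct, Pi.star_apply, Complex.re_sum]
    apply Finset.sum_nonneg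
    intro i _
    simpa [mul_comm, Complex.mul_conj] using Complex.normSq_nonneg (v i)
  have hexp : fbar (P + (γ : ℂ) • (1 : Matrix (Fin L) (Fin L) ℂ)) q xb
        - fbar (P + (γ : ℂ) • (1 : Matrix (Fin L) (Fin L) ℂ)) q u
      = (star u ⬝ᵥ P.mulVec v).re + (star v ⬝ᵥ P.mulVec u).re
        + (star v ⬝ᵥ P.mulVec v).re
        + γ * (star u ⬝ᵥ v).re + γ * (star v ⬝ᵥ u).re + γ * (star v ⬝ᵥ v).re
        - (star q ⬝ᵥ v).re - (star v ⬝ᵥ q).re := by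
    simp only [fbar, hxb', Matrix.mulVec_add, dotProduct_add, add_dotProduct,
      star_add, hR, Complex.add_re, Complex.sub_re, Complex.mul_re,
      Complex.ofReal_re, Complex.ofReal_im]
    ring
  rw [hexp, hmix, Complex.add_re, hsv u, hvu, hvq]
  simp only [Complex.ofReal_re]
  linarith [mul_nonneg hγ hvv, hPv]
end

section
/- Let L be a positive integer, let P ∈ ℂ^{L×L} be Hermitian positive semidefinite with largest eigenvalue λ_P, let q ∈ ℂ^L, let γ ≥ 0, and define f̄(y) = Re(y†(P + γI)y − q†y − y†q). Let u ∈ S^L, let Ψ be the L×L real diagonal matrix with nonnegative diagonal entries ψ_1,…,ψ_L, and set x̄ = (I + Ψ)u. Then f̄(x̄) − f̄(u) ≥ (2γ − (L/4)·λ_P − 2·‖q‖₂)·Σ_l ψ_l. -/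
open Matrix
open scoped ComplexOrder

/-- Hermitian symmetry for sesquilinear forms. -/
lemma herm_symm {L : ℕ} {R : Matrix (Fin L) (Fin L) ℂ} (hR : R.IsHermitian)
    (x y : Fin L → ℂ) : star x ⬝ᵥ R.mulVec y = star (star y ⬝ᵥ R.mulVec x) := by
  rw [Matrix.star_dotProduct, Matrix.star_mulVec, hR.eq, Matrix.dotProduct_mulVec]

/-- With `P` Hermitian PSD of largest eigenvalue `lamP`, `γ ≥ 0`,
`u ∈ S^L`, `Ψ` real diagonal with nonnegative entries `ψ_l`, and `x̄ = (I + Ψ)u`: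
`f̄(x̄) − f̄(u) ≥ (2γ − (L/4)·lamP − 2‖q‖₂)·Σ_l ψ_l`. -/
theorem stmt10 (L : ℕ) (hL : 0 < L) (P : Matrix (Fin L) (Fin L) ℂ)
    (hP : P.PosSemidef)
    (lamP : ℝ) (hlamP_mem : ∃ i, hP.isHermitian.eigenvalues i = lamP)
    (hlamP_ub : ∀ i, hP.isHermitian.eigenvalues i ≤ lamP)
    (q : Fin L → ℂ) (γ : ℝ) (hγ : 0 ≤ γ)
    (u : Fin L → ℂ) (hu : ∀ l, ‖u l‖ = 1)
    (ψ : Fin L → ℝ) (hψ : ∀ l, 0 ≤ ψ l)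
    (Ψ : Matrix (Fin L) (Fin L) ℂ)
    (hΨ : Ψ = Matrix.diagonal fun l => ((ψ l : ℝ) : ℂ))
    (xb : Fin L → ℂ)
    (hxb : xb = ((1 : Matrix (Fin L) (Fin L) ℂ) + Ψ).mulVec u) :
    (2 * γ - ((L : ℝ) / 4) * lamP
        - 2 * Real.sqrt (∑ l, ‖q l‖ ^ 2)) * (∑ l, ψ l)
      ≤ fbar (P + (γ : ℂ) • (1 : Matrix (Fin L) (Fin L) ℂ)) q xb
        - fbar (P + (γ : ℂ) • (1 : Matrix (Fin L) (Fin L) ℂ)) q u := by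
  classical
  -- `λ_P • 1 - P` is PSD
  have hQ : (((lamP : ℂ) • (1 : Matrix (Fin L) (Fin L) ℂ)) - P).PosSemidef := by
    have hsp := hP.isHermitian.spectral_theorem
    set U : Matrix (Fin L) (Fin L) ℂ :=
      (IsHermitian.eigenvectorUnitary hP.isHermitian : Matrix (Fin L) (Fin L) ℂ) with hUdef
    have hUU : U * star U = 1 :=
      (Matrix.mem_unitaryGroup_iff).mp (IsHermitian.eigenvectorUnitary hP.isHermitian).2
    have hkey : ((lamP : ℂ) • (1 : Matrix (Fin L) (Fin L) ℂ)) - P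
        = U * diagonal (fun i => ((lamP - hP.isHermitian.eigenvalues i : ℝ) : ℂ)) * star U := by
      have h1 : (diagonal (fun i : Fin L => ((lamP - hP.isHermitian.eigenvalues i : ℝ) : ℂ)))
          = (lamP : ℂ) • (1 : Matrix (Fin L) (Fin L) ℂ)
            - diagonal (RCLike.ofReal ∘ hP.isHermitian.eigenvalues) := by
        ext i j
        by_cases h : i = j <;>
          simp [h, Matrix.diagonal_apply, Matrix.one_apply, Complex.ofReal_sub, Matrix.sub_apply,
            Matrix.smul_apply, RCLike.ofReal]
      rw [h1, Matrix.mul_sub, Matrix.sub_mul,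
        (Unitary.conjStarAlgAut_apply (S := ℂ) _ _).symm.trans hsp.symm]
      congr 1
      rw [Matrix.mul_smul, Matrix.mul_one, Matrix.smul_mul, hUU]
    rw [hkey]
    exact (Matrix.posSemidef_diagonal_iff.mpr (fun i => by
      rw [Complex.zero_le_real]; linarith [hlamP_ub i])).mul_mul_conjTranspose_same U
  -- quadratic form upper bound
  have hPle : ∀ w : Fin L → ℂ,
      (star w ⬝ᵥ P.mulVec w).re ≤ lamP * (star w ⬝ᵥ w).re := by
    intro w
    have h0 := hQ.dotProduct_mulVec_nonneg w
    rw [Matrix.sub_mulVec, dotProduct_sub, Matrix.smul_mulVec,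
      Matrix.one_mulVec, dotProduct_smul] at h0
    have := (Complex.le_def.mp h0).1
    simpa [Complex.sub_re, smul_eq_mul, Complex.re_ofReal_mul] using this
  -- nonnegativity of the quadratic form
  have hPge : ∀ w : Fin L → ℂ, 0 ≤ (star w ⬝ᵥ P.mulVec w).re := by
    intro w
    exact (Complex.le_def.mp (hP.dotProduct_mulVec_nonneg w)).1
  -- key per-coordinate bound
  have key : ∀ l : Fin L,
      -(↑L / 8 * lamP) ≤ (star (u l) * P.mulVec u l).re := by
    intro l
    set a : Fin L → ℂ := Pi.single l (2 * u l) with ha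
    have expand_add : star (u + a) ⬝ᵥ P.mulVec (u + a)
        = star u ⬝ᵥ P.mulVec u + star u ⬝ᵥ P.mulVec a + star a ⬝ᵥ P.mulVec u
          + star a ⬝ᵥ P.mulVec a := by
      simp [star_add, add_dotProduct, Matrix.mulVec_add, dotProduct_add]; ring
    have expand_sub : star (u - a) ⬝ᵥ P.mulVec (u - a)
        = star u ⬝ᵥ P.mulVec u - star u ⬝ᵥ P.mulVec a - star a ⬝ᵥ P.mulVec u
          + star a ⬝ᵥ P.mulVec a := by
      simp [star_sub, sub_dotProduct, Matrix.mulVec_sub, dotProduct_sub]; ring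
    have hstar_a : star a = Pi.single l (star (2 * u l)) := by
      ext k
      by_cases h : k = l <;> simp [ha, h, Pi.single_apply]
    have haPu : star a ⬝ᵥ P.mulVec u = 2 * (star (u l) * P.mulVec u l) := by
      rw [hstar_a, single_dotProduct, star_mul']
      simp [mul_assoc]
    have hsym : (star u ⬝ᵥ P.mulVec a).re = (star a ⬝ᵥ P.mulVec u).re := by
      rw [herm_symm hP.isHermitian u a]
      exact Complex.conj_re _
    -- norm of u - a
    have hnorm : (star (u - a) ⬝ᵥ (u - a)).re = (L : ℝ) := by
      have : star (u - a) ⬝ᵥ (u - a) = ∑ k, (Complex.normSq ((u - a) k) : ℂ) := by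
        simp [dotProduct, Complex.normSq_eq_conj_mul_self]
      rw [this]
      have hone : ∀ k, (Complex.normSq ((u - a) k) : ℝ) = 1 := by
        intro k
        by_cases h : k = l
        · subst h
          have : (u - a) k = -(u k) := by simp [ha, Pi.single_apply]; ring
          rw [this, Complex.normSq_neg, Complex.normSq_eq_norm_sq, hu k, one_pow]
        · have : (u - a) k = u k := by simp [ha, Pi.single_apply, h]
          rw [this, Complex.normSq_eq_norm_sq, hu k, one_pow]
      push_cast
      rw [Complex.re_sum]
      simp only [Complex.ofReal_re]
      rw [Finset.sum_congr rfl (fun k _ => hone k)]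
      simp
    have h1 := hPge (u + a)
    have h2 := hPle (u - a)
    rw [hnorm] at h2
    rw [expand_add] at h1
    rw [expand_sub] at h2
    have e1 : (star u ⬝ᵥ P.mulVec u + star u ⬝ᵥ P.mulVec a + star a ⬝ᵥ P.mulVec u
        + star a ⬝ᵥ P.mulVec a).re
        = (star u ⬝ᵥ P.mulVec u).re + (star u ⬝ᵥ P.mulVec a).re + (star a ⬝ᵥ P.mulVec u).re
          + (star a ⬝ᵥ P.mulVec a).re := by simp [Complex.add_re]
    have e2 : (star u ⬝ᵥ P.mulVec u - star u ⬝ᵥ P.mulVec a - star a ⬝ᵥ P.mulVec u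
        + star a ⬝ᵥ P.mulVec a).re
        = (star u ⬝ᵥ P.mulVec u).re - (star u ⬝ᵥ P.mulVec a).re - (star a ⬝ᵥ P.mulVec u).re
          + (star a ⬝ᵥ P.mulVec a).re := by simp [Complex.add_re, Complex.sub_re]
    rw [e1] at h1
    rw [e2] at h2
    have hre : (star a ⬝ᵥ P.mulVec u).re = 2 * (star (u l) * P.mulVec u l).re := by
      rw [haPu, Complex.mul_re]
      norm_num
    rw [hsym, hre] at h1 h2
    linarith
  -- setup
  set v : Fin L → ℂ := fun l => ((ψ l : ℝ) : ℂ) * u l with hv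
  have hxbv : xb = u + v := by
    rw [hxb, hΨ, Matrix.add_mulVec, Matrix.one_mulVec]
    congr 1
    ext k
    rw [Matrix.mulVec_diagonal]
  set R : Matrix (Fin L) (Fin L) ℂ := P + (γ : ℂ) • (1 : Matrix (Fin L) (Fin L) ℂ) with hR
  have huu : ∀ l, star (u l) * u l = 1 := by
    intro l
    rw [mul_comm, Complex.star_def, Complex.mul_conj, Complex.normSq_eq_norm_sq, hu l]
    norm_num
  -- complex-level expansion of the difference
  have hC : (star xb ⬝ᵥ R.mulVec xb - star q ⬝ᵥ xb - star xb ⬝ᵥ q)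
      - (star u ⬝ᵥ R.mulVec u - star q ⬝ᵥ u - star u ⬝ᵥ q)
      = (star v ⬝ᵥ P.mulVec v) + (γ : ℂ) * (star v ⬝ᵥ v)
        + (star u ⬝ᵥ P.mulVec v + star v ⬝ᵥ P.mulVec u)
        + (γ : ℂ) * (star u ⬝ᵥ v + star v ⬝ᵥ u)
        - (star q ⬝ᵥ v + star v ⬝ᵥ q) := by
    rw [hxbv, hR]
    simp only [star_add, Matrix.add_mulVec, Matrix.mulVec_add, add_dotProduct,
      dotProduct_add, Matrix.smul_mulVec, Matrix.one_mulVec,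
      dotProduct_smul, smul_eq_mul]
    ring
  -- scalar computations
  have hvv : star v ⬝ᵥ v = ((∑ l, ψ l ^ 2 : ℝ) : ℂ) := by
    unfold dotProduct
    push_cast
    refine Finset.sum_congr rfl fun l _ => ?_
    simp only [hv, Pi.star_apply, star_mul']
    have : star ((ψ l : ℂ)) = (ψ l : ℂ) := by
      simp [Complex.star_def, Complex.conj_ofReal]
    rw [this]
    have : (ψ l : ℂ) * star (u l) * ((ψ l : ℂ) * u l)
        = (ψ l : ℂ) * (ψ l : ℂ) * (star (u l) * u l) := by ring
    rw [this, huu l]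
    ring
  have hvu : star v ⬝ᵥ u = ((∑ l, ψ l : ℝ) : ℂ) := by
    unfold dotProduct
    push_cast
    refine Finset.sum_congr rfl fun l _ => ?_
    simp only [hv, Pi.star_apply, star_mul']
    have h1 : star ((ψ l : ℂ)) = (ψ l : ℂ) := by
      simp [Complex.star_def, Complex.conj_ofReal]
    rw [h1]
    have : (ψ l : ℂ) * star (u l) * u l = (ψ l : ℂ) * (star (u l) * u l) := by ring
    rw [this, huu l, mul_one]
  have hvPu : (star v ⬝ᵥ P.mulVec u).re = ∑ l, ψ l * (star (u l) * P.mulVec u l).re := by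
    unfold dotProduct
    rw [Complex.re_sum]
    refine Finset.sum_congr rfl fun l _ => ?_
    simp only [hv, Pi.star_apply, star_mul']
    have h1 : star ((ψ l : ℂ)) = (ψ l : ℂ) := by
      simp [Complex.star_def, Complex.conj_ofReal]
    rw [h1]
    have : (ψ l : ℂ) * star (u l) * P.mulVec u l
        = (ψ l : ℂ) * (star (u l) * P.mulVec u l) := by ring
    rw [this, Complex.re_ofReal_mul]
  have hqv : (star q ⬝ᵥ v).re = ∑ l, ψ l * (star (q l) * u l).re := by
    unfold dotProduct
    rw [Complex.re_sum]
    refine Finset.sum_congr rfl fun l _ => ?_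
    simp only [hv, Pi.star_apply]
    have : star (q l) * ((ψ l : ℂ) * u l) = (ψ l : ℂ) * (star (q l) * u l) := by ring
    rw [this, Complex.re_ofReal_mul]
  -- the difference of costs
  have hdiff : fbar R q xb - fbar R q u
      = (star v ⬝ᵥ P.mulVec v).re + γ * (∑ l, ψ l ^ 2)
        + 2 * (star v ⬝ᵥ P.mulVec u).re + 2 * γ * (∑ l, ψ l)
        - 2 * (star q ⬝ᵥ v).re := by
    unfold fbar
    rw [← Complex.sub_re, hC, herm_symm hP.isHermitian u v,
      Matrix.star_dotProduct u v, Matrix.star_dotProduct v q, hvv, hvu]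
    simp [Complex.add_re, Complex.sub_re, Complex.re_ofReal_mul, Complex.conj_re,
      ← Complex.ofReal_pow]
    ring
  -- bounds
  have hA : 0 ≤ (star v ⬝ᵥ P.mulVec v).re := hPge v
  have hS : 0 ≤ ∑ l, ψ l := Finset.sum_nonneg fun l _ => hψ l
  have hSq : 0 ≤ ∑ l, ψ l ^ 2 := Finset.sum_nonneg fun l _ => sq_nonneg _
  set nq : ℝ := Real.sqrt (∑ l, ‖q l‖ ^ 2) with hnq
  have hB : -((L : ℝ) / 8 * lamP) * (∑ l, ψ l) ≤ (star v ⬝ᵥ P.mulVec u).re := by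
    rw [hvPu]
    calc -((L : ℝ) / 8 * lamP) * (∑ l, ψ l)
        = ∑ l, ψ l * -((L : ℝ) / 8 * lamP) := by rw [← Finset.sum_mul]; ring
      _ ≤ ∑ l, ψ l * (star (u l) * P.mulVec u l).re :=
          Finset.sum_le_sum fun l _ => mul_le_mul_of_nonneg_left (key l) (hψ l)
  have hCq : (star q ⬝ᵥ v).re ≤ nq * (∑ l, ψ l) := by
    rw [hqv]
    calc ∑ l, ψ l * (star (q l) * u l).re
        ≤ ∑ l, ψ l * nq := by
          refine Finset.sum_le_sum fun l _ => mul_le_mul_of_nonneg_left ?_ (hψ l)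
          have h1 : (star (q l) * u l).re ≤ ‖star (q l) * u l‖ :=
            Complex.re_le_norm _
          have h2 : ‖star (q l) * u l‖ = ‖q l‖ := by
            simp [Complex.star_def, norm_mul, Complex.norm_conj, hu l]
          have h3 : ‖q l‖ ≤ nq := by
            rw [hnq, show ‖q l‖ = Real.sqrt (‖q l‖ ^ 2) by
              rw [Real.sqrt_sq (norm_nonneg _)]]
            exact Real.sqrt_le_sqrt (Finset.single_le_sum
              (fun k _ => sq_nonneg (‖q k‖)) (Finset.mem_univ l))
          linarith
      _ = nq * (∑ l, ψ l) := by rw [← Finset.sum_mul]; ring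
  have hgSq : 0 ≤ γ * (∑ l, ψ l ^ 2) := mul_nonneg hγ hSq
  rw [hdiff]
  nlinarith [hB, hCq, hA, hgSq, hS]
end

section
/- (Lemma 2) Let L be a positive integer, let P ∈ ℂ^{L×L} be Hermitian positive semidefinite with largest eigenvalue λ_P, let q ∈ ℂ^L, and let γ ∈ ℝ satisfy γ ≥ (L/8)·λ_P + ‖q‖₂. Define f̄(y) = Re(y†(P + γI)y − q†y − y†q). Then for every x̄ ∈ ℂ^L with |x̄_l| ≥ 1 for all l (in particular, for any tangent-space update x̄ = x + β·P_x(−w(x)) produced from a point x ∈ S^L), one has f̄(x̄) ≥ f̄(R(x̄)), where (R(x̄))_l = x̄_l/|x̄_l|. -/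
open Matrix
open scoped ComplexOrder

/-- Retraction onto the complex circle manifold: `(R(w))_l = w_l / |w_l|`. -/
noncomputable def retr {L : ℕ} (w : Fin L → ℂ) : Fin L → ℂ :=
  fun l => w l / ((‖w l‖ : ℝ) : ℂ)

lemma rayleigh {L : ℕ} (P : Matrix (Fin L) (Fin L) ℂ) (hP : P.PosSemidef)
    (lamP : ℝ) (hub : ∀ i, hP.isHermitian.eigenvalues i ≤ lamP) (x : Fin L → ℂ) :
    (star x ⬝ᵥ P.mulVec x).re ≤ lamP * (star x ⬝ᵥ x).re := by
  classical
  set hH := hP.isHermitian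
  set V : Matrix (Fin L) (Fin L) ℂ := (hH.eigenvectorUnitary : Matrix (Fin L) (Fin L) ℂ) with hV
  set c : Fin L → ℂ := (star V) *ᵥ x with hc
  set D : Matrix (Fin L) (Fin L) ℂ := diagonal (RCLike.ofReal ∘ hH.eigenvalues) with hD
  have hVmem : V ∈ Matrix.unitaryGroup (Fin L) ℂ := (hH.eigenvectorUnitary).2
  have hVV : V * star V = 1 := (Matrix.mem_unitaryGroup_iff).mp hVmem
  have hstarc : star c = star x ᵥ* V := by
    rw [hc]; ext i
    simp [Matrix.mulVec, Matrix.vecMul, dotProduct, mul_comm]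
  have hspec : P = V * D * star V := hH.spectral_theorem
  have h1 : star x ⬝ᵥ P.mulVec x = star c ⬝ᵥ D.mulVec c := by
    rw [hspec, ← Matrix.mulVec_mulVec, ← Matrix.mulVec_mulVec, Matrix.dotProduct_mulVec,
      ← hstarc, ← hc]
  have h2 : star x ⬝ᵥ x = star c ⬝ᵥ c := by
    conv_rhs => rw [hstarc, hc, Matrix.dotProduct_mulVec, Matrix.vecMul_vecMul, hVV,
      Matrix.vecMul_one]
  rw [h1, h2]
  have hre1 : (star c ⬝ᵥ D.mulVec c).re = ∑ i, hH.eigenvalues i * Complex.normSq (c i) := by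
    rw [hD]
    simp only [dotProduct, Matrix.mulVec_diagonal, Pi.star_apply, Complex.re_sum]
    refine Finset.sum_congr rfl fun i _ => ?_
    simp [Complex.normSq_apply, Complex.mul_re, RCLike.star_def]
    ring
  have hre2 : (star c ⬝ᵥ c).re = ∑ i, Complex.normSq (c i) := by
    simp only [dotProduct, Pi.star_apply, Complex.re_sum]
    refine Finset.sum_congr rfl fun i _ => ?_
    simp [Complex.normSq_apply, Complex.mul_re, RCLike.star_def]
  rw [hre1, hre2, Finset.mul_sum]
  exact Finset.sum_le_sum fun i _ => mul_le_mul_of_nonneg_right (hub i) (Complex.normSq_nonneg _)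

lemma herm_re_symm {L : ℕ} {M : Matrix (Fin L) (Fin L) ℂ} (hM : M.IsHermitian)
    (a b : Fin L → ℂ) : (star a ⬝ᵥ M.mulVec b).re = (star b ⬝ᵥ M.mulVec a).re := by
  have key : star (star a ⬝ᵥ M.mulVec b) = star b ⬝ᵥ M.mulVec a := by
    calc star (star a ⬝ᵥ M.mulVec b)
        = star (M.mulVec b) ⬝ᵥ a := by rw [← Matrix.star_dotProduct]
      _ = (star b ᵥ* Mᴴ) ⬝ᵥ a := by rw [Matrix.star_mulVec]
      _ = star b ⬝ᵥ (Mᴴ.mulVec a) := by rw [← Matrix.dotProduct_mulVec]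
      _ = star b ⬝ᵥ M.mulVec a := by rw [hM.eq]
  have := congrArg Complex.re key
  simpa using this

lemma polar {L : ℕ} (P : Matrix (Fin L) (Fin L) ℂ) (hP : P.PosSemidef)
    (lamP : ℝ) (hub : ∀ i, hP.isHermitian.eigenvalues i ≤ lamP) (u v : Fin L → ℂ) :
    -(lamP * (star (u - v) ⬝ᵥ (u - v)).re) ≤ 4 * (star u ⬝ᵥ P.mulVec v).re := by
  have hid : (star (u+v) ⬝ᵥ P.mulVec (u+v)).re - (star (u-v) ⬝ᵥ P.mulVec (u-v)).re
      = 4 * (star u ⬝ᵥ P.mulVec v).re := by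
    have hsymm := herm_re_symm hP.isHermitian u v
    simp only [Matrix.mulVec_add, Matrix.mulVec_sub, star_add, star_sub,
      add_dotProduct, dotProduct_add, sub_dotProduct,
      dotProduct_sub, Complex.add_re, Complex.sub_re] at *
    linarith
  have h1 : 0 ≤ (star (u+v) ⬝ᵥ P.mulVec (u+v)).re := by
    simpa using hP.re_dotProduct_nonneg (u+v)
  have h2 : (star (u-v) ⬝ᵥ P.mulVec (u-v)).re ≤ lamP * (star (u-v) ⬝ᵥ (u-v)).re :=
    rayleigh P hP lamP hub (u-v)
  linarith

lemma keylem {L : ℕ} (hL : 0 < L) (P : Matrix (Fin L) (Fin L) ℂ) (hP : P.PosSemidef)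
    (lamP : ℝ) (hlam0 : 0 ≤ lamP) (hub : ∀ i, hP.isHermitian.eigenvalues i ≤ lamP)
    (r : Fin L → ℂ) (hr : ∀ k, ‖r k‖ = 1) (l : Fin L) :
    -((L : ℝ) / 8 * lamP) ≤ ((starRingEnd ℂ) (r l) * P.mulVec r l).re := by
  classical
  set s : ℝ := Real.sqrt L with hs
  have hs0 : 0 < s := Real.sqrt_pos.mpr (by exact_mod_cast hL)
  have hss : s * s = L := Real.mul_self_sqrt (by positivity)
  set c : ℝ := Real.sqrt s with hcdef
  have hc0 : 0 < c := Real.sqrt_pos.mpr hs0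
  have hcc : c * c = s := Real.mul_self_sqrt hs0.le
  set u : Fin L → ℂ := Pi.single l (((c : ℝ) : ℂ) * r l) with hu
  set v : Fin L → ℂ := fun k => ((c⁻¹ : ℝ) : ℂ) * r k with hv
  -- the dot product equals the quantity of interest
  have he : star u ⬝ᵥ P.mulVec v = (starRingEnd ℂ) (r l) * P.mulVec r l := by
    rw [hu, ← Pi.single_star, single_dotProduct]
    have hvsmul : v = ((c⁻¹ : ℝ) : ℂ) • r := by funext k; simp [hv]
    rw [hvsmul, Matrix.mulVec_smul]
    have : ((c : ℝ) : ℂ) ≠ 0 := by exact_mod_cast hc0.ne'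
    simp only [Pi.smul_apply, smul_eq_mul, star_mul', RCLike.star_def, Complex.conj_ofReal, Complex.ofReal_inv]
    field_simp [RCLike.star_def]
  -- norm computation
  have hnorm : (star (u - v) ⬝ᵥ (u - v)).re = 2 * s - 2 := by
    have hre : (star (u - v) ⬝ᵥ (u - v)).re = ∑ k, Complex.normSq ((u - v) k) := by
      simp only [dotProduct, Pi.star_apply, Complex.re_sum]
      refine Finset.sum_congr rfl fun k _ => ?_
      simp [Complex.normSq_apply, Complex.mul_re, RCLike.star_def]
      ring
    rw [hre]
    have hval : ∀ k, Complex.normSq ((u - v) k)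
        = if k = l then (c - c⁻¹)^2 else (c⁻¹)^2 := by
      intro k
      by_cases hk : k = l
      · subst hk
        have : (u - v) k = (((c : ℝ) : ℂ) - ((c⁻¹ : ℝ) : ℂ)) * r k := by
          simp [hu, hv, Pi.single_eq_same]; ring
        rw [if_pos rfl, this, Complex.normSq_mul]
        have : Complex.normSq (r k) = 1 := by
          rw [← Complex.sq_norm, hr k]; norm_num
        rw [this, mul_one]
        rw [show (((c : ℝ) : ℂ) - ((c⁻¹ : ℝ) : ℂ)) = (((c - c⁻¹ : ℝ)) : ℂ) by push_cast; ring]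
        rw [Complex.normSq_ofReal]; ring
      · have : (u - v) k = -(((c⁻¹ : ℝ) : ℂ) * r k) := by
          simp [hu, hv, Pi.single_eq_of_ne hk]
        rw [if_neg hk, this, Complex.normSq_neg, Complex.normSq_mul]
        have h1 : Complex.normSq (r k) = 1 := by
          rw [← Complex.sq_norm, hr k]; norm_num
        rw [h1, mul_one, Complex.normSq_ofReal]; ring
    rw [Finset.sum_congr rfl fun k _ => hval k]
    have hsplit : ∀ k : Fin L, (if k = l then (c - c⁻¹)^2 else (c⁻¹)^2)
        = (c⁻¹)^2 + (if k = l then (c - c⁻¹)^2 - (c⁻¹)^2 else 0) := by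
      intro k; by_cases hk : k = l <;> simp [hk]
    rw [Finset.sum_congr rfl fun k _ => hsplit k, Finset.sum_add_distrib,
      Finset.sum_const, Finset.sum_ite_eq' Finset.univ l, if_pos (Finset.mem_univ l),
      Finset.card_univ, Fintype.card_fin, nsmul_eq_mul]
    have hcne : c ≠ 0 := hc0.ne'
    have hsne : s ≠ 0 := hs0.ne'
    field_simp
    nlinarith [hcc, hss, hc0, hs0]
  -- conclude
  have hp := polar P hP lamP hub u v
  rw [he, hnorm] at hp
  nlinarith [sq_nonneg (s - 2), hlam0, hp, hss]

lemma expand_fbar {L : ℕ} (M : Matrix (Fin L) (Fin L) ℂ) (hM : M.IsHermitian)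
    (q r d : Fin L → ℂ) :
    fbar M q (r + d) = fbar M q r + (star d ⬝ᵥ M.mulVec d).re
      + 2 * ((star d ⬝ᵥ M.mulVec r).re - (star d ⬝ᵥ q).re) := by
  have h1 : (star r ⬝ᵥ M.mulVec d).re = (star d ⬝ᵥ M.mulVec r).re := herm_re_symm hM r d
  have h2 : (star q ⬝ᵥ d).re = (star d ⬝ᵥ q).re := by
    rw [Matrix.star_dotProduct]
    simp
  unfold fbar
  simp only [Matrix.mulVec_add, star_add, add_dotProduct, dotProduct_add,
    Complex.add_re, Complex.sub_re] at *
  linarith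

set_option maxHeartbeats 1000000 in
/-- Lemma 2: With `P` Hermitian PSD of largest eigenvalue `lamP`
and `γ ≥ (L/8)·lamP + ‖q‖₂`, for every `x̄ ∈ ℂ^L` with `|x̄_l| ≥ 1` for all `l`,
`f̄(x̄) ≥ f̄(R(x̄))` where `f̄(y) = Re(y†(P+γI)y − q†y − y†q)` and
`(R(x̄))_l = x̄_l/|x̄_l|`. -/
theorem stmt11 (L : ℕ) (hL : 0 < L) (P : Matrix (Fin L) (Fin L) ℂ)
    (hP : P.PosSemidef)
    (lamP : ℝ) (hlamP_mem : ∃ i, hP.isHermitian.eigenvalues i = lamP)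
    (hlamP_ub : ∀ i, hP.isHermitian.eigenvalues i ≤ lamP)
    (q : Fin L → ℂ) (γ : ℝ)
    (hγ : ((L : ℝ) / 8) * lamP + Real.sqrt (∑ l, ‖q l‖ ^ 2) ≤ γ) :
    ∀ xb : Fin L → ℂ, (∀ l, 1 ≤ ‖xb l‖) →
      fbar (P + (γ : ℂ) • (1 : Matrix (Fin L) (Fin L) ℂ)) q (retr xb)
        ≤ fbar (P + (γ : ℂ) • (1 : Matrix (Fin L) (Fin L) ℂ)) q xb := by
  intro xb hxb
  classical
  set M : Matrix (Fin L) (Fin L) ℂ := P + (γ : ℂ) • (1 : Matrix (Fin L) (Fin L) ℂ) with hM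
  set r : Fin L → ℂ := retr xb with hrdef
  -- basic positivity facts
  have hlam0 : 0 ≤ lamP := by
    obtain ⟨i, hi⟩ := hlamP_mem
    exact hi ▸ hP.eigenvalues_nonneg i
  have hq0 : 0 ≤ Real.sqrt (∑ l, ‖q l‖ ^ 2) := Real.sqrt_nonneg _
  have hγ0 : 0 ≤ γ := le_trans (by positivity) hγ
  -- |r l| = 1
  have habs : ∀ l, ‖r l‖ = 1 := by
    intro l
    have h1 : (0:ℝ) < ‖xb l‖ := lt_of_lt_of_le one_pos (hxb l)
    simp [hrdef, retr, norm_div, Complex.norm_real, abs_of_pos h1, div_self h1.ne']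
  -- xb l = |xb l| * r l
  have hxr : ∀ l, xb l = ((‖xb l‖ : ℝ) : ℂ) * r l := by
    intro l
    have h1 : (0:ℝ) < ‖xb l‖ := lt_of_lt_of_le one_pos (hxb l)
    have hne : ((‖xb l‖ : ℝ) : ℂ) ≠ 0 := by exact_mod_cast h1.ne'
    rw [hrdef]
    show xb l = _ * (xb l / _)
    rw [mul_comm, div_mul_cancel₀ _ hne]
  set d : Fin L → ℂ := xb - r with hddef
  have hd : ∀ l, d l = ((‖xb l‖ - 1 : ℝ) : ℂ) * r l := by
    intro l
    have h := hxr l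
    have hdl : d l = xb l - r l := rfl
    rw [hdl, Complex.ofReal_sub, sub_mul, Complex.ofReal_one, one_mul, ← h]
  have hxbrd : xb = r + d := by
    funext l; simp [hddef]
  -- M is PSD
  have hMpsd : M.PosSemidef := by
    rw [hM]
    refine Matrix.PosSemidef.add hP ?_
    have : ((γ:ℂ) • (1 : Matrix (Fin L) (Fin L) ℂ)) = Matrix.diagonal (fun _ => (γ:ℂ)) := by
      ext i j
      by_cases h : i = j <;> simp [Matrix.smul_apply, Matrix.one_apply, Matrix.diagonal_apply, h]
    rw [this]
    refine Matrix.PosSemidef.diagonal ?_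
    intro i
    rw [Complex.le_def]
    constructor <;> simp [hγ0]
  -- M *ᵥ r decomposition
  have hMr : M.mulVec r = P.mulVec r + (γ:ℂ) • r := by
    rw [hM, Matrix.add_mulVec, Matrix.smul_mulVec, Matrix.one_mulVec]
  -- rewrite goal
  rw [hxbrd, expand_fbar M hMpsd.isHermitian q r d]
  have hA : 0 ≤ (star d ⬝ᵥ M.mulVec d).re := by
    simpa using hMpsd.re_dotProduct_nonneg d
  have hB : 0 ≤ (star d ⬝ᵥ M.mulVec r).re - (star d ⬝ᵥ q).re := by
    have hsub : (star d ⬝ᵥ M.mulVec r).re - (star d ⬝ᵥ q).re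
        = ∑ l, ((starRingEnd ℂ) (d l) * ((M.mulVec r) l - q l)).re := by
      rw [← Complex.sub_re, ← dotProduct_sub]
      simp only [dotProduct, Pi.star_apply, Pi.sub_apply, Complex.re_sum,
        RCLike.star_def]
    rw [hsub]
    refine Finset.sum_nonneg fun l _ => ?_
    have hεnn : 0 ≤ ‖xb l‖ - 1 := by linarith [hxb l]
    have hterm : ((starRingEnd ℂ) (d l) * ((M.mulVec r) l - q l)).re
        = (‖xb l‖ - 1) *
          (((starRingEnd ℂ) (r l) * P.mulVec r l).re + γ - ((starRingEnd ℂ) (r l) * q l).re) := by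
      rw [hd l, hMr]
      simp only [_root_.map_mul, Complex.conj_ofReal, Pi.add_apply, Pi.smul_apply, smul_eq_mul]
      have hrr : (starRingEnd ℂ) (r l) * r l = 1 := by
        rw [mul_comm, Complex.mul_conj]
        norm_cast
        rw [← Complex.sq_norm, habs l]; norm_num
      have : (starRingEnd ℂ) (r l) * (P.mulVec r l + (γ:ℂ) * r l - q l)
          = (starRingEnd ℂ) (r l) * P.mulVec r l + (γ:ℂ) - (starRingEnd ℂ) (r l) * q l := by
        rw [mul_sub, mul_add]
        rw [show (starRingEnd ℂ) (r l) * ((γ:ℂ) * r l) = (γ:ℂ) * ((starRingEnd ℂ) (r l) * r l) by ring, hrr, mul_one]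
      rw [mul_assoc, this]
      rw [Complex.re_ofReal_mul]
      congr 1
    rw [hterm]
    refine mul_nonneg hεnn ?_
    have h1 : -((L : ℝ) / 8 * lamP) ≤ ((starRingEnd ℂ) (r l) * P.mulVec r l).re :=
      keylem hL P hP lamP hlam0 hlamP_ub r habs l
    have h2 : ((starRingEnd ℂ) (r l) * q l).re ≤ Real.sqrt (∑ k, ‖q k‖ ^ 2) := by
      have ha : ((starRingEnd ℂ) (r l) * q l).re ≤ ‖(starRingEnd ℂ) (r l) * q l‖ :=
        Complex.re_le_norm _
      have hb : ‖(starRingEnd ℂ) (r l) * q l‖ = ‖q l‖ := by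
        rw [norm_mul, Complex.norm_conj, habs l, one_mul]
      have hc : ‖q l‖ ≤ Real.sqrt (∑ k, ‖q k‖ ^ 2) := by
        rw [show ‖q l‖ = Real.sqrt (‖q l‖ ^ 2) by
          rw [Real.sqrt_sq (norm_nonneg _)]]
        apply Real.sqrt_le_sqrt
        exact Finset.single_le_sum (fun k _ => sq_nonneg (‖q k‖)) (Finset.mem_univ l)
      linarith
    linarith
  linarith
end

section
/- (One-step monotonicity of PDR) Let L be a positive integer, let P ∈ ℂ^{L×L} be Hermitian positive semidefinite with largest eigenvalue λ_P, let q ∈ ℂ^L, and let γ ∈ ℝ satisfy γ ≥ (L/8)·λ_P + ‖q‖₂. Define f̄(y) = Re(y†(P + γI)y − q†y − y†q) and w(x) = 2(P + γI)x − 2q. Assume λ_P + γ > 0 and that the step size β satisfies 0 < β < 1/(λ_P + γ) (note λ_P + γ is the largest eigenvalue of P + γI). Then for every x ∈ S^L, the PDR update x_+ = R(x + β·P_x(−w(x))) is well defined, lies in S^L, and satisfies f̄(x_+) ≤ f̄(x). -/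
open Matrix
open scoped ComplexOrder

private lemma conj_mul_self_re (z : ℂ) : ((starRingEnd ℂ) z * z).re = Complex.normSq z := by
  simp [Complex.normSq_apply, Complex.mul_re]

private lemma conj_mul_re_comm (z₁ z₂ : ℂ) :
    ((starRingEnd ℂ) z₁ * z₂).re = ((starRingEnd ℂ) z₂ * z₁).re := by
  simp [Complex.mul_re]; ring

private lemma two_mul_re (z : ℂ) : ((2:ℂ) * z).re = 2 * z.re := by
  simp [Complex.mul_re]

private lemma quadUB {L : ℕ} {P : Matrix (Fin L) (Fin L) ℂ} (hP : P.PosSemidef) {lam : ℝ}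
    (hub : ∀ i, hP.isHermitian.eigenvalues i ≤ lam) (y : Fin L → ℂ) :
    (star y ⬝ᵥ P.mulVec y).re ≤ lam * (star y ⬝ᵥ y).re := by
  classical
  have hH := hP.isHermitian
  set U : Matrix (Fin L) (Fin L) ℂ := (hH.eigenvectorUnitary : Matrix (Fin L) (Fin L) ℂ) with hU
  have hUU : U * star U = 1 := Matrix.mem_unitaryGroup_iff.mp hH.eigenvectorUnitary.2
  set g : Fin L → ℂ := (star U) *ᵥ y with hg
  have hsg : star g = star y ᵥ* U := by
    rw [hg, Matrix.star_mulVec]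
    simp [Matrix.star_eq_conjTranspose]
  have claim2 : star y ⬝ᵥ y = star g ⬝ᵥ g := by
    rw [hsg, hg, Matrix.dotProduct_mulVec, Matrix.vecMul_vecMul, hUU, Matrix.vecMul_one]
  have claim1 : star y ⬝ᵥ P.mulVec y
      = star g ⬝ᵥ (Matrix.diagonal (RCLike.ofReal ∘ hH.eigenvalues)).mulVec g := by
    conv_lhs => rw [hH.spectral_theorem, Unitary.conjStarAlgAut_apply]
    rw [hsg, hg, Matrix.dotProduct_mulVec, Matrix.dotProduct_mulVec, Matrix.vecMul_vecMul]
    rw [Matrix.dotProduct_mulVec, Matrix.vecMul_vecMul, hU, mul_assoc]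
  rw [claim1, claim2]
  have hdiag : (star g ⬝ᵥ (Matrix.diagonal (RCLike.ofReal ∘ hH.eigenvalues)).mulVec g).re
      = ∑ i, hH.eigenvalues i * Complex.normSq (g i) := by
    rw [dotProduct, Complex.re_sum]
    congr 1; funext i
    simp only [Matrix.mulVec_diagonal, Pi.star_apply, Complex.normSq_apply, Function.comp_apply,
      RCLike.ofReal_alg, Complex.mul_re, Complex.mul_im, Complex.conj_re, Complex.conj_im]
    simp [Complex.ofReal_re]
    ring
  have hnorm : (star g ⬝ᵥ g).re = ∑ i, Complex.normSq (g i) := by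
    rw [dotProduct, Complex.re_sum]
    congr 1; funext i
    simp [Complex.normSq_apply, Complex.mul_re]
  rw [hdiag, hnorm, Finset.mul_sum]
  apply Finset.sum_le_sum
  intro i _
  exact mul_le_mul_of_nonneg_right (hub i) (Complex.normSq_nonneg _)

private lemma herm_dot {L : ℕ} {R : Matrix (Fin L) (Fin L) ℂ} (hR : R.IsHermitian)
    (a b : Fin L → ℂ) : star a ⬝ᵥ R.mulVec b = star (star b ⬝ᵥ R.mulVec a) := by
  rw [Matrix.star_dotProduct, Matrix.star_mulVec, hR.eq]
  rw [← Matrix.dotProduct_mulVec]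

private lemma herm_dot_re {L : ℕ} {R : Matrix (Fin L) (Fin L) ℂ} (hR : R.IsHermitian)
    (a b : Fin L → ℂ) : (star a ⬝ᵥ R.mulVec b).re = (star b ⬝ᵥ R.mulVec a).re := by
  rw [herm_dot hR]; simp

private lemma expand_quad {L : ℕ} {R : Matrix (Fin L) (Fin L) ℂ} (hR : R.IsHermitian)
    (a b : Fin L → ℂ) (s : ℝ) :
    (star (a + (s:ℂ) • b) ⬝ᵥ R.mulVec (a + (s:ℂ) • b)).re
      = (star a ⬝ᵥ R.mulVec a).re + 2*s*(star b ⬝ᵥ R.mulVec a).re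
        + s^2 * (star b ⬝ᵥ R.mulVec b).re := by
  have h1 : (star a ⬝ᵥ R.mulVec b).re = (star b ⬝ᵥ R.mulVec a).re := herm_dot_re hR a b
  simp only [star_add, star_smul, Matrix.mulVec_add, Matrix.mulVec_smul,
    add_dotProduct, dotProduct_add, smul_dotProduct,
    dotProduct_smul, smul_eq_mul, Complex.star_def, Complex.conj_ofReal,
    Complex.add_re, Complex.re_ofReal_mul]
  rw [h1]; ring

private lemma keyIneq {L : ℕ} (hL : 0 < L) {P : Matrix (Fin L) (Fin L) ℂ} (hP : P.PosSemidef)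
    {lam : ℝ} (hub : ∀ i, hP.isHermitian.eigenvalues i ≤ lam) (hlam : 0 ≤ lam)
    (x : Fin L → ℂ) (hx : ∀ l, Complex.normSq (x l) = 1) (l : Fin L) :
    -(((L:ℝ)/8) * lam) ≤ ((starRingEnd ℂ) (x l) * P.mulVec x l).re := by
  classical
  set t : ℝ := Real.sqrt L with ht
  have htsq : t^2 = L := Real.sq_sqrt (Nat.cast_nonneg L)
  have ht1 : 1 ≤ t := by
    have : (1:ℝ) ≤ L := by exact_mod_cast hL
    nlinarith [Real.sqrt_nonneg (L:ℝ)]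
  set e : Fin L → ℂ := fun k => if k = l then x l else 0 with he
  have hdot_e : ∀ z : Fin L → ℂ, star e ⬝ᵥ z = (starRingEnd ℂ) (x l) * z l := by
    intro z
    simp [dotProduct, he, apply_ite, Complex.star_def]
  set m : ℝ := ((starRingEnd ℂ) (x l) * P.mulVec x l).re with hm
  set A : ℝ := (star x ⬝ᵥ P.mulVec x).re with hA
  set p : ℝ := (star e ⬝ᵥ P.mulVec e).re with hp
  have hm' : (star e ⬝ᵥ P.mulVec x).re = m := by rw [hdot_e]
  have hxx : (star x ⬝ᵥ x).re = L := by
    rw [dotProduct, Complex.re_sum]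
    rw [Finset.sum_congr rfl (fun k _ => by
      show ((star x) k * x k).re = 1
      simpa [Complex.star_def, Complex.normSq_apply, Complex.mul_re] using hx k)]
    simp
  have hel : e l = x l := by simp [he]
  have hee : (star e ⬝ᵥ e).re = 1 := by
    rw [hdot_e, hel]
    simpa [Complex.normSq_apply, Complex.mul_re] using hx l
  have hex : (star e ⬝ᵥ x).re = 1 := by
    rw [hdot_e]
    simpa [Complex.normSq_apply, Complex.mul_re] using hx l
  have hplus : 0 ≤ A + 2*t*m + t^2*p := by
    have h0 := hP.dotProduct_mulVec_nonneg (x + (t:ℂ) • e)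
    have h0' : 0 ≤ (star (x + (t:ℂ) • e) ⬝ᵥ P.mulVec (x + (t:ℂ) • e)).re :=
      (Complex.le_def.mp h0).1
    rw [expand_quad hP.isHermitian] at h0'
    rw [hm'] at h0'
    exact h0'
  have hminus : A - 2*t*m + t^2*p ≤ lam * ((L:ℝ) - 2*t + t^2) := by
    have h1 := quadUB hP hub (x + ((-t : ℝ):ℂ) • e)
    rw [expand_quad hP.isHermitian] at h1
    have hnorm := expand_quad (Matrix.isHermitian_one (n := Fin L) (α := ℂ)) x e (-t)
    rw [Matrix.one_mulVec] at hnorm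
    rw [hnorm] at h1
    simp only [Matrix.one_mulVec] at h1
    rw [hm', hxx, hee, hex] at h1
    calc A - 2*t*m + t^2*p = A + 2*(-t)*m + (-t)^2*p := by ring
    _ ≤ lam * ((L:ℝ) + 2*(-t)*1 + (-t)^2*1) := h1
    _ = lam * ((L:ℝ) - 2*t + t^2) := by ring
  have ht0 : 0 < t := lt_of_lt_of_le one_pos ht1
  rw [← htsq] at hminus ⊢
  nlinarith [mul_nonneg (mul_nonneg hlam ht0.le) (sq_nonneg (t - 2)), hplus, hminus, ht0, ht1]

private lemma sc1 (a b : ℂ) (ha : Complex.normSq a = 1) :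
    ((starRingEnd ℂ) (-b + ((((starRingEnd ℂ) b * a).re : ℝ) : ℂ) * a) * a).re = 0 := by
  have ha' : a.re * a.re + a.im * a.im = 1 := by simpa [Complex.normSq_apply] using ha
  simp only [map_add, map_neg, _root_.map_mul, Complex.conj_ofReal, Complex.add_re, Complex.neg_re,
    Complex.mul_re, Complex.mul_im, Complex.conj_re, Complex.conj_im, Complex.ofReal_re,
    Complex.ofReal_im, Complex.add_im, Complex.neg_im]
  linear_combination (b.re*a.re + b.im*a.im) * ha'

private lemma sc2 (a b : ℂ) (β : ℝ) (ha : Complex.normSq a = 1) :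
    Complex.normSq (a + (β:ℂ) * (-b + ((((starRingEnd ℂ) b * a).re : ℝ) : ℂ) * a))
      = 1 + β^2 * Complex.normSq (-b + ((((starRingEnd ℂ) b * a).re : ℝ) : ℂ) * a) := by
  have ha' : a.re * a.re + a.im * a.im = 1 := by simpa [Complex.normSq_apply] using ha
  simp only [Complex.normSq_apply, map_add, map_neg, _root_.map_mul, Complex.conj_ofReal,
    Complex.add_re, Complex.neg_re, Complex.mul_re, Complex.mul_im, Complex.conj_re,
    Complex.conj_im, Complex.ofReal_re, Complex.ofReal_im, Complex.add_im, Complex.neg_im]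
  linear_combination (1 + 2*β*(b.re*a.re + b.im*a.im)) * ha'

private lemma sc3 (a b : ℂ) (ha : Complex.normSq a = 1) :
    ((starRingEnd ℂ) (-b + ((((starRingEnd ℂ) b * a).re : ℝ) : ℂ) * a) * b).re
      = - Complex.normSq (-b + ((((starRingEnd ℂ) b * a).re : ℝ) : ℂ) * a) := by
  have ha' : a.re * a.re + a.im * a.im = 1 := by simpa [Complex.normSq_apply] using ha
  simp only [Complex.normSq_apply, map_add, map_neg, _root_.map_mul, Complex.conj_ofReal,
    Complex.add_re, Complex.neg_re, Complex.mul_re, Complex.mul_im, Complex.conj_re,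
    Complex.conj_im, Complex.ofReal_re, Complex.ofReal_im, Complex.add_im, Complex.neg_im]
  linear_combination (b.re*a.re + b.im*a.im)^2 * ha'

private lemma sc4 (uu xx : ℂ) (r : ℝ) (hr : ‖uu‖ = r) (hr1 : 1 ≤ r)
    (hx : Complex.normSq xx = 1) (hux : ((starRingEnd ℂ) uu * xx).re = 1) :
    Complex.normSq (uu / ((r:ℝ):ℂ) - xx) = 2*(1 - 1/r) := by
  have hr0 : 0 < r := lt_of_lt_of_le one_pos hr1
  have hsq : uu.re^2 + uu.im^2 = r^2 := by
    rw [← hr, Complex.sq_norm, Complex.normSq_apply]; ring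
  have hx' : xx.re^2 + xx.im^2 = 1 := by
    rw [← hx, Complex.normSq_apply]; ring
  have hux' : uu.re * xx.re + uu.im * xx.im = 1 := by
    simpa [Complex.mul_re] using hux
  rw [Complex.normSq_apply]
  simp only [Complex.sub_re, Complex.sub_im, Complex.div_ofReal_re, Complex.div_ofReal_im]
  field_simp
  linear_combination hsq - 2*r*hux' + r^2*hx'

private lemma sc5 (pz xz qz : ℂ) (γ : ℝ) (hx : Complex.normSq xz = 1) :
    ((starRingEnd ℂ) (2 * pz + 2*(γ:ℂ) * xz - 2 * qz) * xz).re
      = 2*((starRingEnd ℂ) xz * pz).re + 2*γ - 2*((starRingEnd ℂ) qz * xz).re := by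
  have hx' : xz.re * xz.re + xz.im * xz.im = 1 := by simpa [Complex.normSq_apply] using hx
  simp only [map_sub, map_add, _root_.map_mul, map_ofNat, Complex.conj_ofReal,
    Complex.sub_re, Complex.add_re, Complex.mul_re, Complex.mul_im, Complex.sub_im,
    Complex.add_im, Complex.conj_re, Complex.conj_im, Complex.ofReal_re, Complex.ofReal_im,
    Complex.re_ofNat, Complex.im_ofNat]
  linear_combination (2*γ)*hx'

private lemma perl (k β cl nv r : ℝ) (hβ : 0 < β) (hβk : β * k < 1)
    (hcl : 0 ≤ cl) (hnv : 0 ≤ nv) (hr : 1 ≤ r) (hr2 : r^2 = 1 + β^2*nv) :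
    k * (2*(1 - 1/r)) + ((cl - β*nv)/r - cl) ≤ 0 := by
  have hr0 : 0 < r := lt_of_lt_of_le one_pos hr
  have heq : k * (2*(1 - 1/r)) + ((cl - β*nv)/r - cl)
      = (2*k*(r-1) - cl*(r-1) - β*nv) / r := by
    field_simp
    ring
  rw [heq]
  apply div_nonpos_of_nonpos_of_nonneg _ hr0.le
  have hnum : β * (2*k*(r-1) - cl*(r-1) - β*nv) ≤ 0 := by
    have h1 : β^2 * nv = r^2 - 1 := by linarith
    nlinarith [mul_nonneg (mul_nonneg hβ.le hcl) (sub_nonneg.mpr hr),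
      mul_nonneg (sub_nonneg.mpr hr) (sub_nonneg.mpr hβk.le)]
  nlinarith [hnum, hβ]

/-- One-step monotonicity of PDR: With `P` Hermitian PSD of
largest eigenvalue `lamP`, `γ ≥ (L/8)·lamP + ‖q‖₂`, `lamP + γ > 0` (the largest
eigenvalue of `P + γI`) and `0 < β < 1/(lamP + γ)`, for every `x ∈ S^L` the PDR
update `x₊ = R(x + β·P_x(−w(x)))` with `w(x) = 2(P+γI)x − 2q` is well defined,
lies in `S^L`, and satisfies `f̄(x₊) ≤ f̄(x)`. -/
theorem stmt12 (L : ℕ) (hL : 0 < L) (P : Matrix (Fin L) (Fin L) ℂ)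
    (hP : P.PosSemidef)
    (lamP : ℝ) (hlamP_mem : ∃ i, hP.isHermitian.eigenvalues i = lamP)
    (hlamP_ub : ∀ i, hP.isHermitian.eigenvalues i ≤ lamP)
    (q : Fin L → ℂ) (γ : ℝ)
    (hγ : ((L : ℝ) / 8) * lamP + Real.sqrt (∑ l, ‖q l‖ ^ 2) ≤ γ)
    (hpos : 0 < lamP + γ)
    (β : ℝ) (hβ : 0 < β) (hβ' : β < 1 / (lamP + γ)) :
    ∀ x : Fin L → ℂ, (∀ l, ‖x l‖ = 1) →
      (∀ l, x l + (β : ℂ) *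
        proj x (-(fun l' =>
          2 * (P + (γ : ℂ) • (1 : Matrix (Fin L) (Fin L) ℂ)).mulVec x l'
            - 2 * q l')) l ≠ 0) ∧
      (∀ l, ‖
        (retr (fun l' => x l' + (β : ℂ) *
          proj x (-(fun l'' =>
            2 * (P + (γ : ℂ) • (1 : Matrix (Fin L) (Fin L) ℂ)).mulVec x l''
              - 2 * q l'')) l') l)‖ = 1) ∧
      fbar (P + (γ : ℂ) • (1 : Matrix (Fin L) (Fin L) ℂ)) q
        (retr (fun l' => x l' + (β : ℂ) *
          proj x (-(fun l'' =>
            2 * (P + (γ : ℂ) • (1 : Matrix (Fin L) (Fin L) ℂ)).mulVec x l''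
              - 2 * q l'')) l'))
        ≤ fbar (P + (γ : ℂ) • (1 : Matrix (Fin L) (Fin L) ℂ)) q x := by
  intro x hx
  have hxn : ∀ l, Complex.normSq (x l) = 1 := by
    intro l; rw [← Complex.sq_norm, hx l]; norm_num
  obtain ⟨i0, hi0⟩ := hlamP_mem
  have hlam0 : 0 ≤ lamP := hi0 ▸ hP.eigenvalues_nonneg i0
  have hβk : β * (lamP + γ) < 1 := by
    rw [lt_div_iff₀ hpos] at hβ'; exact hβ'
  set R : Matrix (Fin L) (Fin L) ℂ := P + (γ:ℂ) • (1 : Matrix (Fin L) (Fin L) ℂ) with hRdef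
  have hRherm : R.IsHermitian := by
    apply hP.isHermitian.add
    unfold Matrix.IsHermitian
    rw [Matrix.conjTranspose_smul, Matrix.conjTranspose_one, Complex.star_def,
      Complex.conj_ofReal]
  set w : Fin L → ℂ := fun l => 2 * R.mulVec x l - 2 * q l with hwdef
  set v : Fin L → ℂ := proj x (-w) with hvdef
  have hv : ∀ l, v l = -(w l) + ((((starRingEnd ℂ) (w l) * x l).re : ℝ) : ℂ) * x l := by
    intro l
    simp only [hvdef, proj, Pi.neg_apply, map_neg, neg_mul, Complex.neg_re, Complex.ofReal_neg]
    ring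
  set u : Fin L → ℂ := fun l' => x l' + (β:ℂ) * v l' with hudef
  -- per-component scalar facts
  have h1 : ∀ l, ((starRingEnd ℂ) (v l) * x l).re = 0 := by
    intro l; rw [hv l]; exact sc1 (x l) (w l) (hxn l)
  have hnu : ∀ l, Complex.normSq (u l) = 1 + β^2 * Complex.normSq (v l) := by
    intro l
    have h := sc2 (x l) (w l) β (hxn l)
    rw [← hv l] at h
    exact h
  have h3 : ∀ l, ((starRingEnd ℂ) (v l) * w l).re = - Complex.normSq (v l) := by
    intro l
    have h := sc3 (x l) (w l) (hxn l)
    rw [← hv l] at h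
    exact h
  have hr2 : ∀ l, (‖u l‖)^2 = 1 + β^2 * Complex.normSq (v l) := by
    intro l; rw [Complex.sq_norm]; exact hnu l
  have hr1 : ∀ l, 1 ≤ ‖u l‖ := by
    intro l
    nlinarith [norm_nonneg (u l), hr2 l, Complex.normSq_nonneg (v l), sq_nonneg β]
  have hu_ne : ∀ l, u l ≠ 0 := by
    intro l h
    have h2 := hr1 l
    rw [h] at h2
    simp only [norm_zero] at h2
    norm_num at h2
  refine ⟨fun l => hu_ne l, ?_, ?_⟩
  · -- unit modulus of retraction
    intro l
    show ‖u l / ((‖u l‖ : ℝ) : ℂ)‖ = 1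
    have h0 : ‖u l‖ ≠ 0 := ne_of_gt (lt_of_lt_of_le one_pos (hr1 l))
    rw [norm_div, Complex.norm_real, Real.norm_eq_abs, abs_of_nonneg (norm_nonneg _), div_self h0]
  · -- monotonicity
    set y : Fin L → ℂ := retr u with hydef
    set d : Fin L → ℂ := fun l => y l - x l with hddef
    have hyxd : y = x + d := by funext l; show y l = x l + (y l - x l); ring
    have hdl : ∀ l, d l = u l / ((‖u l‖ : ℝ) : ℂ) - x l := fun l => rfl
    -- conj u * x has re 1
    have hux : ∀ l, ((starRingEnd ℂ) (u l) * x l).re = 1 := by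
      intro l
      have e0 : (starRingEnd ℂ) (u l) * x l
          = (starRingEnd ℂ) (x l) * x l + (β:ℂ) * ((starRingEnd ℂ) (v l) * x l) := by
        show (starRingEnd ℂ) (x l + (β:ℂ) * v l) * x l = _
        rw [map_add, _root_.map_mul, Complex.conj_ofReal]; ring
      rw [e0, Complex.add_re, Complex.re_ofReal_mul, conj_mul_self_re, hxn l, h1 l]
      ring
    have hNd : ∀ l, Complex.normSq (d l) = 2*(1 - 1/(‖u l‖)) := by
      intro l
      rw [hdl l]
      exact sc4 (u l) (x l) (‖u l‖) rfl (hr1 l) (hxn l) (hux l)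
    -- re of conj d * w
    have hdw_l : ∀ l, ((starRingEnd ℂ) (d l) * w l).re
        = ((((starRingEnd ℂ) (w l) * x l).re - β * Complex.normSq (v l)) / ‖u l‖
            - ((starRingEnd ℂ) (w l) * x l).re) := by
      intro l
      have e2 : (starRingEnd ℂ) (d l) * w l
          = ((starRingEnd ℂ) (u l) * w l) / ((‖u l‖ : ℝ) : ℂ)
            - (starRingEnd ℂ) (x l) * w l := by
        rw [hdl l, map_sub, map_div₀, Complex.conj_ofReal]
        ring
      have e3 : (starRingEnd ℂ) (u l) * w l
          = (starRingEnd ℂ) (x l) * w l + (β:ℂ) * ((starRingEnd ℂ) (v l) * w l) := by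
        show (starRingEnd ℂ) (x l + (β:ℂ) * v l) * w l = _
        rw [map_add, _root_.map_mul, Complex.conj_ofReal]; ring
      rw [e2, Complex.sub_re, Complex.div_ofReal_re, e3, Complex.add_re,
        Complex.re_ofReal_mul, h3 l, conj_mul_re_comm (x l) (w l)]
      ring
    -- c l nonneg
    have hRxl : ∀ l, R.mulVec x l = P.mulVec x l + (γ:ℂ) * x l := by
      intro l
      rw [hRdef, Matrix.add_mulVec, Matrix.smul_mulVec, Matrix.one_mulVec]
      simp
    have hcl0 : ∀ l, 0 ≤ ((starRingEnd ℂ) (w l) * x l).re := by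
      intro l
      have hwl : w l = 2 * P.mulVec x l + 2*(γ:ℂ) * x l - 2 * q l := by
        show 2 * R.mulVec x l - 2 * q l = _
        rw [hRxl l]; ring
      have hcl_eq : ((starRingEnd ℂ) (w l) * x l).re
          = 2*((starRingEnd ℂ) (x l) * P.mulVec x l).re + 2*γ
            - 2*((starRingEnd ℂ) (q l) * x l).re := by
        rw [hwl]
        exact sc5 (P.mulVec x l) (x l) (q l) γ (hxn l)
      have hkey := keyIneq hL hP hlamP_ub hlam0 x hxn l
      have hq_le : ((starRingEnd ℂ) (q l) * x l).re
          ≤ Real.sqrt (∑ k, ‖q k‖ ^ 2) := by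
        calc ((starRingEnd ℂ) (q l) * x l).re ≤ ‖(starRingEnd ℂ) (q l) * x l‖ :=
              Complex.re_le_norm _
        _ = ‖q l‖ * ‖x l‖ := by
              rw [norm_mul, Complex.norm_conj]
        _ = ‖q l‖ := by rw [hx l, mul_one]
        _ ≤ Real.sqrt (∑ k, ‖q k‖ ^ 2) := by
            rw [show ‖q l‖ = Real.sqrt (‖q l‖^2) by
              rw [Real.sqrt_sq (norm_nonneg _)]]
            exact Real.sqrt_le_sqrt (Finset.single_le_sum
              (fun k _ => sq_nonneg (‖q k‖)) (Finset.mem_univ l))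
      rw [hcl_eq]
      linarith
    -- fbar identity
    have hqd : (star q ⬝ᵥ d).re = (star d ⬝ᵥ q).re := by
      rw [Matrix.star_dotProduct]; simp
    have hwsplit : (star d ⬝ᵥ w) = 2 * (star d ⬝ᵥ R.mulVec x) - 2 * (star d ⬝ᵥ q) := by
      simp only [dotProduct, Finset.mul_sum, ← Finset.sum_sub_distrib]
      apply Finset.sum_congr rfl
      intro l _
      show (star d) l * (2 * R.mulVec x l - 2 * q l) = _
      ring
    have key_id : fbar R q y
        = fbar R q x + (star d ⬝ᵥ R.mulVec d).re + (star d ⬝ᵥ w).re := by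
      unfold fbar
      rw [hyxd]
      simp only [Matrix.mulVec_add, dotProduct_add, add_dotProduct, star_add]
      have e1 : (star x ⬝ᵥ R.mulVec d).re = (star d ⬝ᵥ R.mulVec x).re := herm_dot_re hRherm x d
      have e4 := congrArg Complex.re hwsplit
      rw [Complex.sub_re, two_mul_re, two_mul_re] at e4
      simp only [Complex.add_re, Complex.sub_re]
      rw [e1, e4, hqd]
      ring
    -- quadratic bound
    have hdd : (star d ⬝ᵥ d).re = ∑ l, Complex.normSq (d l) := by
      rw [dotProduct, Complex.re_sum]
      exact Finset.sum_congr rfl fun l _ => conj_mul_self_re (d l)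
    have hRd : (star d ⬝ᵥ R.mulVec d).re ≤ (lamP + γ) * ∑ l, Complex.normSq (d l) := by
      have hsplit : star d ⬝ᵥ R.mulVec d = star d ⬝ᵥ P.mulVec d + (γ:ℂ) * (star d ⬝ᵥ d) := by
        rw [hRdef, Matrix.add_mulVec, Matrix.smul_mulVec, Matrix.one_mulVec,
          dotProduct_add, dotProduct_smul]
        rw [smul_eq_mul]
      have hq2 := quadUB hP hlamP_ub d
      rw [hsplit, Complex.add_re, Complex.re_ofReal_mul]
      rw [hdd] at hq2 ⊢
      ring_nf
      ring_nf at hq2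
      linarith
    have hdw : (star d ⬝ᵥ w).re = ∑ l, ((starRingEnd ℂ) (d l) * w l).re := by
      rw [dotProduct, Complex.re_sum]
      simp [Complex.star_def]
    -- final sum bound
    have hsum : (star d ⬝ᵥ R.mulVec d).re + (star d ⬝ᵥ w).re ≤ 0 := by
      have step : (lamP + γ) * (∑ l, Complex.normSq (d l))
          + ∑ l, ((starRingEnd ℂ) (d l) * w l).re ≤ 0 := by
        rw [Finset.mul_sum, ← Finset.sum_add_distrib]
        apply Finset.sum_nonpos
        intro l _
        rw [hNd l, hdw_l l]
        exact perl (lamP + γ) β _ _ _ hβ hβk (hcl0 l) (Complex.normSq_nonneg _)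
          (hr1 l) (hr2 l)
      rw [hdw]
      linarith [hRd]
    linarith [key_id, hsum]
end

section
/- (Lemma 3) Let K, S, L be positive integers, and for each p ∈ {1,…,K} let B_p ∈ ℂ^{S×L} and d_p ∈ ℂ^S. Set P = Σ_p B_p† B_p (a Hermitian positive semidefinite matrix with largest eigenvalue λ_P), q = Σ_p B_p† d_p, and define f(x) = Σ_p ‖d_p − B_p x‖₂² for x ∈ ℂ^L. Let γ ∈ ℝ satisfy γ ≥ (L/8)·λ_P + ‖q‖₂, assume λ_P + γ > 0, and let the step size β satisfy 0 < β < 1/(λ_P + γ). Let x_0 ∈ S^L and define recursively x_{k+1} = R(x_k + β·P_{x_k}(−(2(P + γI)x_k − 2q))). Then every x_k lies in S^L, the sequence (f(x_k))_{k≥0} is non-increasing and nonnegative, and therefore (f(x_k))_{k≥0} converges to a finite limit f* ≥ 0. -/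
open Matrix
open scoped ComplexOrder

namespace Stmt13Aux

theorem herm_symm {n : ℕ} (P : Matrix (Fin n) (Fin n) ℂ) (hH : P.IsHermitian) (u w : Fin n → ℂ) :
    star u ⬝ᵥ P *ᵥ w = star (star w ⬝ᵥ P *ᵥ u) := by
  rw [star_dotProduct, star_mulVec, ← dotProduct_mulVec, hH.eq]

theorem dot_symm {a b : ℕ} (M : Matrix (Fin a) (Fin b) ℂ) (u : Fin a → ℂ) (w : Fin b → ℂ) :
    star u ⬝ᵥ M *ᵥ w = star (star w ⬝ᵥ Mᴴ *ᵥ u) := by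
  rw [star_dotProduct, star_mulVec, ← dotProduct_mulVec]

theorem re_star_self {n : ℕ} (v : Fin n → ℂ) :
    (star v ⬝ᵥ v).re = ∑ l, Complex.normSq (v l) := by
  rw [dotProduct, Complex.re_sum]
  refine Finset.sum_congr rfl fun l _ => ?_
  rw [Pi.star_apply, Complex.star_def, Complex.conj_mul']
  norm_cast
  rw [Complex.normSq_eq_norm_sq]

theorem quad_le_lam (n : ℕ) (P : Matrix (Fin n) (Fin n) ℂ) (hH : P.IsHermitian) (lam : ℝ)
    (hub : ∀ i, hH.eigenvalues i ≤ lam) (x : Fin n → ℂ) :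
    (star x ⬝ᵥ P *ᵥ x).re ≤ lam * (star x ⬝ᵥ x).re := by
  set U : Matrix (Fin n) (Fin n) ℂ := (hH.eigenvectorUnitary : Matrix (Fin n) (Fin n) ℂ) with hU
  set y : Fin n → ℂ := star U *ᵥ x with hy
  have hsy : star y = star x ᵥ* U := by
    rw [hy, star_mulVec]; congr 1; rw [star_eq_conjTranspose, conjTranspose_conjTranspose]
  have h1 : star x ⬝ᵥ P *ᵥ x = star y ⬝ᵥ (diagonal (RCLike.ofReal ∘ hH.eigenvalues)) *ᵥ y := by
    conv_lhs => rw [hH.spectral_theorem, Unitary.conjStarAlgAut_apply]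
    rw [← mulVec_mulVec, ← mulVec_mulVec, dotProduct_mulVec, hsy, hy]
  have h2 : star x ⬝ᵥ x = star y ⬝ᵥ y := by
    rw [hsy, hy, ← dotProduct_mulVec, mulVec_mulVec,
      (Matrix.mem_unitaryGroup_iff).mp hH.eigenvectorUnitary.2, one_mulVec]
  rw [h1, h2]
  have key : ∀ (c : ℂ) (r : ℝ), (star c * ((r:ℂ) * c)).re = r * Complex.normSq c := by
    intro c r
    rw [show (star c) * ((r:ℂ) * c) = (r:ℂ) * (star c * c) by ring, Complex.star_def,
      Complex.conj_mul']
    norm_cast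
    rw [Complex.normSq_eq_norm_sq]
  have hd : (star y ⬝ᵥ (diagonal (RCLike.ofReal ∘ hH.eigenvalues)) *ᵥ y).re
      = ∑ i, hH.eigenvalues i * Complex.normSq (y i) := by
    rw [dotProduct, Complex.re_sum]
    refine Finset.sum_congr rfl fun i _ => ?_
    rw [mulVec_diagonal]
    exact key (y i) (hH.eigenvalues i)
  have h3 : (star y ⬝ᵥ y).re = ∑ i, Complex.normSq (y i) := by
    rw [dotProduct, Complex.re_sum]
    refine Finset.sum_congr rfl fun i _ => ?_
    simpa using key (y i) 1
  rw [hd, h3, Finset.mul_sum]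
  exact Finset.sum_le_sum fun i _ => mul_le_mul_of_nonneg_right (hub i) (Complex.normSq_nonneg _)

theorem expandc {n : ℕ} (P : Matrix (Fin n) (Fin n) ℂ) (hH : P.IsHermitian) (a z : Fin n → ℂ)
    (c : ℝ) :
    (star ((c:ℂ) • a + z) ⬝ᵥ P *ᵥ ((c:ℂ) • a + z)).re
      = c^2 * (star a ⬝ᵥ P *ᵥ a).re + (star z ⬝ᵥ P *ᵥ z).re + 2*c*(star a ⬝ᵥ P *ᵥ z).re := by
  have hs : star ((c:ℂ) • a + z) = (c:ℂ) • star a + star z := by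
    simp [star_smul, Complex.star_def, Complex.conj_ofReal]
  rw [hs, mulVec_add, mulVec_smul, dotProduct_add, add_dotProduct, add_dotProduct,
    smul_dotProduct, smul_dotProduct, dotProduct_smul, dotProduct_smul,
    herm_symm P hH z a]
  simp only [smul_eq_mul, Complex.add_re, Complex.mul_re, Complex.ofReal_re, Complex.ofReal_im]
  have h1 : (star (star a ⬝ᵥ P *ᵥ z)).re = (star a ⬝ᵥ P *ᵥ z).re := by
    simp [Complex.star_def]
  have h2 : (star (star a ⬝ᵥ P *ᵥ z)).im = -(star a ⬝ᵥ P *ᵥ z).im := by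
    simp [Complex.star_def]
  rw [h1, h2]; ring

theorem per_coord (β t lg c : ℝ) (hβ : 0 < β) (hlg : 0 ≤ lg) (h1 : β * lg < 1)
    (hc : -lg ≤ c) :
    2 * (1 - 1/Real.sqrt (1 + (β*t)^2)) * (-c) - β * t^2 / Real.sqrt (1+(β*t)^2) ≤ 0 := by
  set ρ := Real.sqrt (1 + (β*t)^2) with hρ
  have hρ2 : ρ^2 = 1 + (β*t)^2 := Real.sq_sqrt (by positivity)
  have hρ1 : 1 ≤ ρ := by
    have h := Real.sqrt_le_sqrt (show (1:ℝ) ≤ 1 + (β*t)^2 by nlinarith [sq_nonneg (β*t)])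
    rwa [Real.sqrt_one] at h
  have hρ0 : 0 < ρ := by linarith
  have key : 2 * (ρ - 1) * (-c) ≤ β * t^2 := by
    have h2 : ρ - 1 ≤ (β*t)^2 / 2 := by nlinarith
    have h3 : -c ≤ lg := by linarith
    have h4 : 0 ≤ ρ - 1 := by linarith
    calc 2 * (ρ - 1) * (-c) ≤ 2 * (ρ - 1) * lg := by nlinarith
    _ ≤ (β*t)^2 * lg := by nlinarith
    _ = (β * t^2) * (β * lg) := by ring
    _ ≤ (β * t^2) * 1 := by nlinarith [sq_nonneg t]
    _ = β * t^2 := by ring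
  have expand : (2 * (1 - 1/ρ) * (-c) - β * t^2 / ρ) * ρ = 2*(ρ-1)*(-c) - β*t^2 := by
    field_simp
  nlinarith [key, expand]

theorem key_lb {n : ℕ} (P : Matrix (Fin n) (Fin n) ℂ) (hP : P.PosSemidef) (lam : ℝ)
    (hquad : ∀ x, (star x ⬝ᵥ P *ᵥ x).re ≤ lam * (star x ⬝ᵥ x).re)
    (z : Fin n → ℂ) (hz : ∀ j, ‖z j‖ = 1) (l : Fin n) :
    -((n:ℝ)/8 * lam) ≤ ((starRingEnd ℂ) (z l) * (P *ᵥ z) l).re := by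
  classical
  have hone : ∀ j, (starRingEnd ℂ) (z j) * z j = 1 := by
    intro j
    rw [Complex.conj_mul']; norm_cast
    simp [hz j]
  set a : Fin n → ℂ := Pi.single l (z l) with ha
  have hsa : star a = Pi.single l ((starRingEnd ℂ) (z l)) := by
    funext j
    by_cases h : j = l
    · subst h; simp [ha, Complex.star_def]
    · simp [ha, Pi.single_eq_of_ne h, Complex.star_def]
  have hdot : ∀ w : Fin n → ℂ, star a ⬝ᵥ w = (starRingEnd ℂ) (z l) * w l := by
    intro w; rw [hsa]; simp [dotProduct, Pi.single_apply, Finset.sum_ite_eq]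
  have hAa : (star a ⬝ᵥ a).re = 1 := by
    rw [hdot]; simp only [ha, Pi.single_eq_same]; rw [hone]; simp
  have hAz : (star a ⬝ᵥ z).re = 1 := by rw [hdot, hone]; simp
  have hZz : (star z ⬝ᵥ z).re = n := by
    simp only [dotProduct, Complex.re_sum, Pi.star_apply]
    rw [Finset.sum_congr rfl (fun j _ => by rw [show (star (z j)) * z j = 1 from hone j])]
    simp
  have hre : ∀ x : Fin n → ℂ, 0 ≤ (star x ⬝ᵥ P *ᵥ x).re := by
    intro x
    have := hP.dotProduct_mulVec_nonneg x
    rw [Complex.le_def] at this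
    simpa using this.1
  set A := (star a ⬝ᵥ P *ᵥ a).re
  set T := (star z ⬝ᵥ P *ᵥ z).re
  set R := (star a ⬝ᵥ P *ᵥ z).re with hR
  have hRval : R = ((starRingEnd ℂ) (z l) * (P *ᵥ z) l).re := by rw [hR, hdot]
  have h1 : 0 ≤ 2^2 * A + T + 2*2*R := by
    have := hre (((2:ℝ):ℂ) • a + z)
    rwa [expandc P hP.1 a z 2] at this
  have h2 : (-2:ℝ)^2 * A + T + 2*(-2)*R ≤ lam * (n:ℝ) := by
    have h3 := hquad (((-2:ℝ):ℂ) • a + z)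
    rw [expandc P hP.1 a z (-2)] at h3
    have h4 : (star ((((-2):ℝ):ℂ) • a + z) ⬝ᵥ ((((-2):ℝ):ℂ) • a + z)).re = (n:ℝ) := by
      have := expandc 1 isHermitian_one a z (-2)
      simp only [one_mulVec] at this
      rw [this, hAa, hAz, hZz]; ring
    calc (-2:ℝ)^2 * A + T + 2*(-2)*R
        ≤ lam * (star ((((-2):ℝ):ℂ) • a + z) ⬝ᵥ ((((-2):ℝ):ℂ) • a + z)).re := h3
    _ = lam * n := by rw [h4]
  rw [← hRval]
  nlinarith [h1, h2]

theorem descent {n : ℕ} (P : Matrix (Fin n) (Fin n) ℂ) (hP : P.PosSemidef) (lam gam β nq : ℝ)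
    (hquad : ∀ x, (star x ⬝ᵥ P *ᵥ x).re ≤ lam * (star x ⬝ᵥ x).re)
    (q : Fin n → ℂ) (hnq : ∀ l, ‖q l‖ ≤ nq)
    (hγ : (n:ℝ)/8 * lam + nq ≤ gam)
    (hpos : 0 ≤ lam + gam) (hβ : 0 < β) (hβ1 : β * (lam + gam) < 1)
    (z : Fin n → ℂ) (hz : ∀ j, ‖z j‖ = 1)
    (t : Fin n → ℝ)
    (ht : ∀ l, t l = 2 * ((starRingEnd ℂ) (z l) * ((P *ᵥ z) l - q l)).im)
    (y : Fin n → ℂ)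
    (hy : ∀ l, y l = z l * (1 - Complex.I * ((β * t l : ℝ) : ℂ))
        / ((Real.sqrt (1 + (β * t l)^2) : ℝ) : ℂ)) :
    (star y ⬝ᵥ P *ᵥ y).re - 2*(star y ⬝ᵥ q).re
      ≤ (star z ⬝ᵥ P *ᵥ z).re - 2*(star z ⬝ᵥ q).re := by
  classical
  have hone : ∀ j, (starRingEnd ℂ) (z j) * z j = 1 := by
    intro j
    rw [Complex.conj_mul']; norm_cast
    simp [hz j]
  set ρ : Fin n → ℝ := fun l => Real.sqrt (1 + (β * t l)^2) with hρdef
  have hρ2 : ∀ l, (ρ l)^2 = 1 + (β * t l)^2 := fun l => Real.sq_sqrt (by positivity)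
  have hρ1 : ∀ l, 1 ≤ ρ l := by
    intro l
    have h := Real.sqrt_le_sqrt (show (1:ℝ) ≤ 1 + (β * t l)^2 by nlinarith [sq_nonneg (β * t l)])
    rwa [Real.sqrt_one] at h
  have hρ0 : ∀ l, 0 < ρ l := fun l => lt_of_lt_of_le one_pos (hρ1 l)
  set m : Fin n → ℂ := fun l => (1 - Complex.I * ((β * t l : ℝ) : ℂ)) / ((ρ l : ℝ) : ℂ) - 1
    with hmdef
  have hρC : ∀ l, ((ρ l : ℝ):ℂ) ≠ 0 := fun l => by exact_mod_cast ne_of_gt (hρ0 l)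
  have hmre : ∀ l, (m l).re = 1 / ρ l - 1 := by
    intro l
    simp only [hmdef, Complex.sub_re, Complex.div_re, Complex.normSq_ofReal, Complex.one_re,
      Complex.sub_im, Complex.one_im, Complex.mul_re, Complex.I_re, Complex.I_im,
      Complex.ofReal_re, Complex.ofReal_im, Complex.one_re]
    have h0 := (hρ0 l).ne'
    field_simp
    try ring
  have hmim : ∀ l, (m l).im = -(β * t l) / ρ l := by
    intro l
    simp only [hmdef, Complex.sub_im, Complex.div_im, Complex.normSq_ofReal, Complex.one_im,
      Complex.sub_re, Complex.one_re, Complex.mul_im, Complex.mul_re, Complex.I_re, Complex.I_im,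
      Complex.ofReal_re, Complex.ofReal_im]
    have h0 := (hρ0 l).ne'
    field_simp
    try ring
  set p : Fin n → ℂ := fun l => z l * m l with hpdef
  have hyzp : y = ((1:ℝ):ℂ) • p + z := by
    funext l
    simp only [Pi.add_apply, Pi.smul_apply, hpdef, hy l, hmdef, Complex.ofReal_one, one_smul]
    show z l * (1 - Complex.I * ((β * t l : ℝ):ℂ)) / ((ρ l : ℝ):ℂ)
      = z l * ((1 - Complex.I * ((β * t l : ℝ):ℂ)) / ((ρ l : ℝ):ℂ) - 1) + z l
    field_simp
    ring
  have hnormp : ∀ l, Complex.normSq (p l) = 2 * (1 - 1 / ρ l) := by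
    intro l
    have h1 : Complex.normSq (p l) = Complex.normSq (m l) := by
      rw [hpdef]
      simp only [Complex.normSq_mul]
      have : Complex.normSq (z l) = 1 := by
        rw [Complex.normSq_eq_norm_sq, hz l]; norm_num
      rw [this, one_mul]
    rw [h1, Complex.normSq_apply, hmre l, hmim l]
    have h0 := hρ0 l
    field_simp
    nlinarith [hρ2 l]
  have hquadY : (star y ⬝ᵥ P *ᵥ y).re
      = (star p ⬝ᵥ P *ᵥ p).re + (star z ⬝ᵥ P *ᵥ z).re + 2*(star p ⬝ᵥ P *ᵥ z).re := by
    rw [hyzp, expandc P hP.1 p z 1]; ring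
  have hlinY : (star y ⬝ᵥ q).re = (star z ⬝ᵥ q).re + (star p ⬝ᵥ q).re := by
    rw [hyzp]
    simp only [Complex.ofReal_one, one_smul, star_add, add_dotProduct, Complex.add_re]
    ring
  have hppsum : (star p ⬝ᵥ p).re = ∑ l, Complex.normSq (p l) := by
    rw [dotProduct, Complex.re_sum]
    refine Finset.sum_congr rfl fun l _ => ?_
    rw [Pi.star_apply, Complex.star_def, Complex.conj_mul']
    norm_cast
    rw [Complex.normSq_eq_norm_sq]
  have hcross : (star p ⬝ᵥ P *ᵥ z).re - (star p ⬝ᵥ q).re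
      = ∑ l, ((starRingEnd ℂ) (p l) * ((P *ᵥ z) l - q l)).re := by
    simp only [dotProduct, Complex.re_sum, ← Finset.sum_sub_distrib]
    refine Finset.sum_congr rfl fun l _ => ?_
    rw [Pi.star_apply, Complex.star_def, mul_sub, Complex.sub_re]
  set c : Fin n → ℝ := fun l => ((starRingEnd ℂ) (z l) * ((P *ᵥ z) l - q l)).re with hcdef
  have hterm : ∀ l, ((starRingEnd ℂ) (p l) * ((P *ᵥ z) l - q l)).re
      = (1/ρ l - 1) * c l + (-(β * t l)/ρ l) * (t l / 2) := by
    intro l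
    have hG : ((starRingEnd ℂ) (z l) * ((P *ᵥ z) l - q l)).im = t l / 2 := by
      rw [ht l]; ring
    have hmul : (starRingEnd ℂ) (p l) * ((P *ᵥ z) l - q l)
        = (starRingEnd ℂ) (m l) * ((starRingEnd ℂ) (z l) * ((P *ᵥ z) l - q l)) := by
      simp only [hpdef, _root_.map_mul]; ring
    rw [hmul, Complex.mul_re, Complex.conj_re, Complex.conj_im, hmre l, hmim l, hG, hcdef]
    ring
  have hclb : ∀ l, -gam ≤ c l := by
    intro l
    have h1 : c l = ((starRingEnd ℂ) (z l) * (P *ᵥ z) l).re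
        - ((starRingEnd ℂ) (z l) * q l).re := by
      rw [hcdef]; simp only [mul_sub, Complex.sub_re]
    have h2 := key_lb P hP lam hquad z hz l
    have h3 : ((starRingEnd ℂ) (z l) * q l).re ≤ nq := by
      calc ((starRingEnd ℂ) (z l) * q l).re ≤ ‖(starRingEnd ℂ) (z l) * q l‖ :=
            Complex.re_le_norm _
      _ = ‖q l‖ := by rw [norm_mul, Complex.norm_conj, hz l, one_mul]
      _ ≤ nq := hnq l
    rw [h1]; linarith
  have hmain : (star p ⬝ᵥ P *ᵥ p).re + 2*((star p ⬝ᵥ P *ᵥ z).re - (star p ⬝ᵥ q).re) ≤ 0 := by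
    have hq1 : (star p ⬝ᵥ P *ᵥ p).re ≤ lam * ∑ l, Complex.normSq (p l) := by
      rw [← hppsum]; exact hquad p
    rw [hcross]
    calc (star p ⬝ᵥ P *ᵥ p).re + 2*(∑ l, ((starRingEnd ℂ) (p l) * ((P *ᵥ z) l - q l)).re)
        ≤ lam * (∑ l, Complex.normSq (p l))
          + 2*(∑ l, ((starRingEnd ℂ) (p l) * ((P *ᵥ z) l - q l)).re) := by linarith
    _ = ∑ l, (lam * Complex.normSq (p l)
          + 2 * ((starRingEnd ℂ) (p l) * ((P *ᵥ z) l - q l)).re) := by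
        rw [Finset.sum_add_distrib, Finset.mul_sum, Finset.mul_sum]
    _ ≤ 0 := by
        refine Finset.sum_nonpos fun l _ => ?_
        rw [hnormp l, hterm l]
        have hpc := per_coord β (t l) (lam + gam) (c l - lam) hβ hpos hβ1
          (by have := hclb l; linarith)
        have hrw : 2 * (1 - 1/Real.sqrt (1 + (β * t l)^2)) * (-(c l - lam))
            - β * (t l)^2 / Real.sqrt (1 + (β * t l)^2)
            = lam * (2 * (1 - 1 / ρ l))
              + 2 * ((1/ρ l - 1) * c l + (-(β * t l)/ρ l) * (t l / 2)) := by
          rw [hρdef]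
          have h0 := (hρ0 l).ne'
          field_simp
          ring
        rw [← hrw]
        exact hpc
  linarith [hquadY, hlinY, hmain]

-- single-matrix expansion of least squares
theorem f_exp {S L : ℕ} (B : Matrix (Fin S) (Fin L) ℂ) (d : Fin S → ℂ) (x : Fin L → ℂ) :
    ∑ s, ‖d s - (B *ᵥ x) s‖^2
      = (∑ s, ‖d s‖^2) + (star x ⬝ᵥ (Bᴴ * B) *ᵥ x).re
        - 2*(star x ⬝ᵥ Bᴴ *ᵥ d).re := by
  have h1 : ∀ s, ‖d s - (B *ᵥ x) s‖^2
      = ‖d s‖^2 + Complex.normSq ((B *ᵥ x) s)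
        - 2*((starRingEnd ℂ) (d s) * (B *ᵥ x) s).re := by
    intro s
    rw [Complex.sq_norm, Complex.sq_norm, Complex.normSq_sub]
    have : (d s * (starRingEnd ℂ) ((B *ᵥ x) s)).re = ((starRingEnd ℂ) (d s) * (B *ᵥ x) s).re := by
      rw [show (starRingEnd ℂ) (d s) * (B *ᵥ x) s
          = (starRingEnd ℂ) (d s * (starRingEnd ℂ) ((B *ᵥ x) s)) by simp only [_root_.map_mul, Complex.conj_conj]]
      exact (Complex.conj_re _).symm
    rw [this]
  rw [Finset.sum_congr rfl (fun s _ => h1 s), Finset.sum_sub_distrib, Finset.sum_add_distrib]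
  have h2 : ∑ s, Complex.normSq ((B *ᵥ x) s) = (star x ⬝ᵥ (Bᴴ * B) *ᵥ x).re := by
    rw [← re_star_self, star_mulVec, ← dotProduct_mulVec, mulVec_mulVec]
  have h3 : ∑ s, ((starRingEnd ℂ) (d s) * (B *ᵥ x) s).re = (star x ⬝ᵥ Bᴴ *ᵥ d).re := by
    have h4 : (star d ⬝ᵥ B *ᵥ x).re = (star x ⬝ᵥ Bᴴ *ᵥ d).re := by
      rw [dot_symm B d x]
      exact Complex.conj_re _
    rw [← h4, dotProduct, Complex.re_sum]
    rfl
  rw [h2, ← Finset.mul_sum, h3]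

theorem abs_one_sub_I (c : ℝ) :
    ‖1 - Complex.I * (c:ℂ)‖ = Real.sqrt (1 + c^2) := by
  rw [Complex.norm_def, Complex.normSq_apply]
  simp only [Complex.sub_re, Complex.one_re, Complex.mul_re, Complex.I_re, Complex.I_im,
    Complex.ofReal_re, Complex.ofReal_im, Complex.sub_im, Complex.one_im, Complex.mul_im]
  ring_nf

theorem proj_formula {n : ℕ} (z w : Fin n → ℂ) (l : Fin n) (hone : (starRingEnd ℂ) (z l) * z l = 1) :
    proj z w l = Complex.I * ((((starRingEnd ℂ) (z l) * w l).im : ℝ) : ℂ) * z l := by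
  unfold proj
  set a := (starRingEnd ℂ) (z l) * w l with hadef
  have hw : w l = z l * a := by
    rw [hadef, ← mul_assoc, mul_comm (z l), hone, one_mul]
  have hcw : (starRingEnd ℂ) (w l) * z l = (starRingEnd ℂ) a := by
    have h5 : (starRingEnd ℂ) (z l * a) * z l = ((starRingEnd ℂ) (z l) * z l) * (starRingEnd ℂ) a := by
      rw [_root_.map_mul]; ring
    rw [hw, h5, hone, one_mul]
  rw [hcw, Complex.conj_re, hw]
  have : a = (a.re : ℂ) + (a.im : ℂ) * Complex.I := (Complex.re_add_im a).symm
  calc z l * a - (a.re:ℂ) * z l = z l * (a - (a.re:ℂ)) := by ring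
  _ = z l * ((a.im:ℂ) * Complex.I) := by rw [show a - (a.re:ℂ) = (a.im:ℂ)*Complex.I by
        apply Complex.ext <;> simp]
  _ = Complex.I * ((a.im : ℝ):ℂ) * z l := by ring

theorem update_formula {n : ℕ} (β : ℝ) (z v : Fin n → ℂ) (l : Fin n)
    (hz : ‖z l‖ = 1) :
    retr (fun j => z j + (β:ℂ) * proj z (-v) j) l
      = z l * (1 - Complex.I * ((β * ((starRingEnd ℂ) (z l) * v l).im : ℝ) : ℂ))
        / ((Real.sqrt (1 + (β * ((starRingEnd ℂ) (z l) * v l).im)^2) : ℝ) : ℂ) := by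
  have hone : (starRingEnd ℂ) (z l) * z l = 1 := by
    rw [Complex.conj_mul']; norm_cast
    simp [hz]
  set t : ℝ := ((starRingEnd ℂ) (z l) * v l).im with htdef
  have hproj : proj z (-v) l = Complex.I * ((-t : ℝ) : ℂ) * z l := by
    rw [proj_formula z (-v) l hone]
    have hneg : ((starRingEnd ℂ) (z l) * (-v) l).im = -t := by
      simp [htdef, Pi.neg_apply, mul_neg]
    rw [hneg]
  have hinner : z l + (β:ℂ) * proj z (-v) l = z l * (1 - Complex.I * ((β * t : ℝ):ℂ)) := by
    rw [hproj]
    push_cast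
    ring
  unfold retr
  simp only [hinner]
  have habs : ‖z l * (1 - Complex.I * ((β * t : ℝ):ℂ))‖
      = Real.sqrt (1 + (β * t)^2) := by
    rw [norm_mul, hz, one_mul, abs_one_sub_I]
  rw [habs]

theorem update_abs {n : ℕ} (β : ℝ) (z : Fin n → ℂ) (l : Fin n) (t : ℝ)
    (hz : ‖z l‖ = 1) :
    ‖z l * (1 - Complex.I * ((β * t : ℝ) : ℂ))
        / ((Real.sqrt (1 + (β * t)^2) : ℝ) : ℂ)‖ = 1 := by
  have h1 : (0:ℝ) < Real.sqrt (1 + (β * t)^2) := by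
    apply Real.sqrt_pos.mpr; positivity
  rw [norm_div, norm_mul, hz, one_mul, abs_one_sub_I, Complex.norm_real, Real.norm_eq_abs,
    abs_of_pos h1, div_self h1.ne']

end Stmt13Aux

/-- Lemma 3: With `P = Σ_p B_p† B_p` (Hermitian PSD, largest
eigenvalue `lamP`), `q = Σ_p B_p† d_p`, `f(x) = Σ_p ‖d_p − B_p x‖₂²`,
`γ ≥ (L/8)·lamP + ‖q‖₂`, `lamP + γ > 0`, `0 < β < 1/(lamP + γ)`, and the PDR iterates
`x_{k+1} = R(x_k + β·P_{x_k}(−(2(P+γI)x_k − 2q)))` started from `x_0 ∈ S^L`: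
every `x_k ∈ S^L`, `(f(x_k))` is non-increasing and nonnegative, and converges
to a finite limit `f* ≥ 0`. -/
theorem stmt13 (K S L : ℕ) (hK : 0 < K) (hS : 0 < S) (hL : 0 < L)
    (B : Fin K → Matrix (Fin S) (Fin L) ℂ) (d : Fin K → Fin S → ℂ)
    (P : Matrix (Fin L) (Fin L) ℂ) (hPdef : P = ∑ p, (B p)ᴴ * B p)
    (hP : P.PosSemidef)
    (lamP : ℝ) (hlamP_mem : ∃ i, hP.isHermitian.eigenvalues i = lamP)
    (hlamP_ub : ∀ i, hP.isHermitian.eigenvalues i ≤ lamP)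
    (q : Fin L → ℂ) (hq : q = ∑ p, (B p)ᴴ.mulVec (d p))
    (f : (Fin L → ℂ) → ℝ)
    (hf : ∀ x, f x = ∑ p, ∑ s, ‖d p s - (B p).mulVec x s‖ ^ 2)
    (γ : ℝ)
    (hγ : ((L : ℝ) / 8) * lamP + Real.sqrt (∑ l, ‖q l‖ ^ 2) ≤ γ)
    (hpos : 0 < lamP + γ)
    (β : ℝ) (hβ : 0 < β) (hβ' : β < 1 / (lamP + γ))
    (x : ℕ → Fin L → ℂ) (hx0 : ∀ l, ‖x 0 l‖ = 1)
    (hrec : ∀ k, x (k + 1) = retr (fun l =>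
      x k l + (β : ℂ) * proj (x k)
        (-(fun l' =>
          2 * (P + (γ : ℂ) • (1 : Matrix (Fin L) (Fin L) ℂ)).mulVec (x k) l'
            - 2 * q l')) l)) :
    (∀ k l, ‖x k l‖ = 1) ∧
    (∀ k, f (x (k + 1)) ≤ f (x k)) ∧
    (∀ k, 0 ≤ f (x k)) ∧
    ∃ fstar : ℝ, 0 ≤ fstar ∧
      Filter.Tendsto (fun k => f (x k)) Filter.atTop (nhds fstar) := by
  classical
  set nq : ℝ := Real.sqrt (∑ l, ‖q l‖ ^ 2) with hnqdef
  have hnql : ∀ l, ‖q l‖ ≤ nq := by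
    intro l
    rw [hnqdef]
    rw [show ‖q l‖ = Real.sqrt (‖q l‖^2) by
      rw [Real.sqrt_sq (norm_nonneg _)]]
    apply Real.sqrt_le_sqrt
    exact Finset.single_le_sum (f := fun j => ‖q j‖^2)
      (fun i _ => sq_nonneg _) (Finset.mem_univ l)
  have hquad : ∀ w, (star w ⬝ᵥ P *ᵥ w).re ≤ lamP * (star w ⬝ᵥ w).re :=
    Stmt13Aux.quad_le_lam L P hP.isHermitian lamP hlamP_ub
  have hβ1 : β * (lamP + γ) < 1 := by
    rw [lt_div_iff₀ hpos] at hβ'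
    linarith
  set C : ℝ := ∑ p, ∑ s, ‖d p s‖^2 with hC
  have hsumV : ((∑ p, (B p)ᴴ * B p) *ᵥ ·) = fun w => ∑ p, ((B p)ᴴ * B p) *ᵥ w := by
    funext w i
    simp only [Matrix.mulVec, dotProduct, Finset.sum_apply, Matrix.sum_apply,
      Finset.sum_mul]
    exact Finset.sum_comm
  have hdotsum : ∀ (v : Fin L → ℂ) (g : Fin K → Fin L → ℂ),
      v ⬝ᵥ (∑ p, g p) = ∑ p, v ⬝ᵥ g p := by
    intro v g
    simp only [dotProduct, Finset.sum_apply, Finset.mul_sum]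
    exact Finset.sum_comm
  have hfq : ∀ w, f w = C + (star w ⬝ᵥ P *ᵥ w).re - 2*(star w ⬝ᵥ q).re := by
    intro w
    rw [hf w, hC]
    rw [Finset.sum_congr rfl (fun p _ => Stmt13Aux.f_exp (B p) (d p) w),
      Finset.sum_sub_distrib, Finset.sum_add_distrib]
    have e1 : ∑ p, (star w ⬝ᵥ ((B p)ᴴ * B p) *ᵥ w).re = (star w ⬝ᵥ P *ᵥ w).re := by
      rw [← Complex.re_sum, ← hdotsum, hPdef]
      congr 1
      congr 1
      exact (congrFun hsumV w).symm
    have e2 : ∑ p, 2*(star w ⬝ᵥ (B p)ᴴ *ᵥ d p).re = 2*(star w ⬝ᵥ q).re := by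
      rw [← Finset.mul_sum, ← Complex.re_sum, ← hdotsum, hq]
    rw [e1, e2]
  have main : ∀ k, (∀ l, ‖x k l‖ = 1) →
      (∀ l, ‖x (k+1) l‖ = 1) ∧ f (x (k+1)) ≤ f (x k) := by
    intro k hzk
    set z : Fin L → ℂ := x k with hzdef
    set v : Fin L → ℂ := fun l' =>
      2 * (P + (γ:ℂ) • (1 : Matrix (Fin L) (Fin L) ℂ)).mulVec z l' - 2 * q l' with hv
    set t : Fin L → ℝ := fun l => ((starRingEnd ℂ) (z l) * v l).im with htd
    have hform : ∀ l, x (k+1) l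
        = z l * (1 - Complex.I * ((β * t l : ℝ):ℂ))
          / ((Real.sqrt (1 + (β * t l)^2) : ℝ):ℂ) := by
      intro l
      rw [hrec k]
      exact Stmt13Aux.update_formula β z v l (hzk l)
    have hone : ∀ l, (starRingEnd ℂ) (z l) * z l = 1 := by
      intro l
      rw [Complex.conj_mul']; norm_cast
      simp [hzk l]
    have htval : ∀ l, t l = 2 * ((starRingEnd ℂ) (z l) * ((P *ᵥ z) l - q l)).im := by
      intro l
      show ((starRingEnd ℂ) (z l) * v l).im
        = 2 * ((starRingEnd ℂ) (z l) * ((P *ᵥ z) l - q l)).im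
      have hv1 : v l = 2 * ((P *ᵥ z) l - q l) + 2*(γ:ℂ) * z l := by
        rw [hv]
        simp only [add_mulVec, smul_mulVec, one_mulVec, Pi.add_apply, Pi.smul_apply,
          smul_eq_mul]
        ring
      rw [hv1]
      have hmul : (starRingEnd ℂ) (z l) * (2*((P *ᵥ z) l - q l) + 2*(γ:ℂ)*z l)
          = 2*((starRingEnd ℂ) (z l) * ((P *ᵥ z) l - q l)) + 2*(γ:ℂ) := by
        rw [mul_add, show (starRingEnd ℂ) (z l) * (2*(γ:ℂ)*z l)
          = 2*(γ:ℂ)*((starRingEnd ℂ) (z l)*z l) by ring, hone l, mul_one]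
        ring
      rw [hmul]
      simp [Complex.add_im, Complex.mul_im]
    have habs1 : ∀ l, ‖x (k+1) l‖ = 1 := by
      intro l; rw [hform l]; exact Stmt13Aux.update_abs β z l (t l) (hzk l)
    refine ⟨habs1, ?_⟩
    rw [hfq (x (k+1)), hfq z]
    have hdes := Stmt13Aux.descent P hP lamP γ β nq hquad q hnql hγ
      (le_of_lt hpos) hβ hβ1 z hzk
      (fun l => 2 * ((starRingEnd ℂ) (z l) * ((P *ᵥ z) l - q l)).im) (fun l => rfl)
      (x (k+1)) (by
        intro l
        rw [hform l, htval l])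
    linarith
  have torus : ∀ k, ∀ l, ‖x k l‖ = 1 := by
    intro k
    induction k with
    | zero => exact hx0
    | succ k ih => exact (main k ih).1
  have hdec : ∀ k, f (x (k+1)) ≤ f (x k) := fun k => (main k (torus k)).2
  have hnonneg : ∀ k, 0 ≤ f (x k) := by
    intro k
    rw [hf]
    exact Finset.sum_nonneg fun p _ => Finset.sum_nonneg fun s _ => sq_nonneg _
  have hanti : Antitone (fun k => f (x k)) := antitone_nat_of_succ_le hdec
  have hbdd : BddBelow (Set.range fun k => f (x k)) := by
    refine ⟨0, ?_⟩
    rintro r ⟨k, rfl⟩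
    exact hnonneg k
  exact ⟨torus, hdec, hnonneg, ⟨⨅ k, f (x k), le_ciInf hnonneg,
    tendsto_atTop_ciInf hanti hbdd⟩⟩
end
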